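/- Inversion solves pattern equations: if Γ ⊢ s : Γ' is a strong typing of a pattern substitution, Γ ⊢ M : A, every logic variable in M is of base type, X does not occur in M, and every variable occurring in M also occurs in s, then the instantiation X ← M[s⁻¹] is well-typed (Γ' ⊢ M[s⁻¹] : A) and solves the equation X[s] ≐ M, i.e. (M[s⁻¹])[s] = M. -/

import Mathlib

namespace LinUnif

/-- Linearity flags on variables/terms. -/
inductive Flag | I | A | L
deriving DecidableEq

/-- Context linearity flags: intuitionistic, affine, used affine, linear, used linear. -/
inductive CFlag | i | a | ua | l | ul
deriving DecidableEq

/-- Types of the linear/affine λ-calculus. -/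
inductive Ty
  | base (n : ℕ)
  | withT (A B : Ty)
  | lolli (A B : Ty)
  | affarr (A B : Ty)
  | arr (A B : Ty)
deriving DecidableEq

/-- Contexts: lists of types tagged with context linearity flags (head = de Bruijn index 1). -/
abbrev Ctx := List (Ty × CFlag)

def flagC : Flag → CFlag | .I => .i | .A => .a | .L => .l
def cToF : CFlag → Flag | .i => .I | .a => .A | .ua => .A | .l => .L | .ul => .L

/-- No linear (L) assumptions occur. -/
def NoLin (Γ : Ctx) : Prop := ∀ e ∈ Γ, e.2 ≠ CFlag.l

/-- The intuitionistic part of a context: L ↦ UL, A ↦ UA. -/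
def bar (Γ : Ctx) : Ctx :=
  Γ.map fun e => (e.1, match e.2 with | .l => CFlag.ul | .a => CFlag.ua | c => c)

/-- Context splitting Γ = Γ₁ ⋈ Γ₂. -/
inductive Split : Ctx → Ctx → Ctx → Prop
  | nil : Split [] [] []
  | int {Γ Γ₁ Γ₂ A} : Split Γ Γ₁ Γ₂ → Split ((A,.i)::Γ) ((A,.i)::Γ₁) ((A,.i)::Γ₂)
  | ulin {Γ Γ₁ Γ₂ A} : Split Γ Γ₁ Γ₂ → Split ((A,.ul)::Γ) ((A,.ul)::Γ₁) ((A,.ul)::Γ₂)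
  | uaff {Γ Γ₁ Γ₂ A} : Split Γ Γ₁ Γ₂ → Split ((A,.ua)::Γ) ((A,.ua)::Γ₁) ((A,.ua)::Γ₂)
  | linl {Γ Γ₁ Γ₂ A} : Split Γ Γ₁ Γ₂ → Split ((A,.l)::Γ) ((A,.l)::Γ₁) ((A,.ul)::Γ₂)
  | linr {Γ Γ₁ Γ₂ A} : Split Γ Γ₁ Γ₂ → Split ((A,.l)::Γ) ((A,.ul)::Γ₁) ((A,.l)::Γ₂)
  | affl {Γ Γ₁ Γ₂ A} : Split Γ Γ₁ Γ₂ → Split ((A,.a)::Γ) ((A,.a)::Γ₁) ((A,.ua)::Γ₂)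
  | affr {Γ Γ₁ Γ₂ A} : Split Γ Γ₁ Γ₂ → Split ((A,.a)::Γ) ((A,.ua)::Γ₁) ((A,.a)::Γ₂)

/-- Affine weakening Γ ≻_aff Γ'. -/
def AffWeak (Γ Γ' : Ctx) : Prop := ∃ Γ'', Split Γ Γ'' Γ' ∧ NoLin Γ''

/-- Typing of variables (1-based de Bruijn indices): Γ ⊢ n^f ⇒ A. -/
inductive VarTy : Ctx → ℕ → Flag → Ty → Prop
  | here {Γ A f} : NoLin Γ → VarTy ((A, flagC f)::Γ) 1 f A
  | there {Γ B l n f A} : VarTy Γ n f A → l ≠ CFlag.l → VarTy ((B,l)::Γ) (n+1) f A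

/-- Relaxed typing of variables Γ ⊢ᵢ n^f ⇒ A : all variables available,
    disregarding linearity/affineness (usedness). -/
inductive VarTyR : Ctx → ℕ → Flag → Ty → Prop
  | here {Γ A l f} : cToF l = f → VarTyR ((A,l)::Γ) 1 f A
  | there {Γ B l n f A} : VarTyR Γ n f A → VarTyR ((B,l)::Γ) (n+1) f A

/-- Substitution entries: a de Bruijn index together with its variable flag f'
    and the extension flag f (the entry `n^{f'f}`). A full substitution is a
    list of entries followed by a shift `↑ⁿ`. -/
abbrev SubE := List (ℕ × Flag × Flag)

def shiftE (es : SubE) : SubE := es.map fun e => (e.1+1, e.2)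

/-- Typing of substitutions (whose entries are variables): Γ ⊢ es.↑ⁿ : Γ'. -/
inductive SubTy : Ctx → SubE → ℕ → Ctx → Prop
  | nil : SubTy [] [] 0 []
  | shift {Γ B l n Γ'} : SubTy Γ [] n Γ' → l ≠ CFlag.l → SubTy ((B,l)::Γ) [] (n+1) Γ'
  | consI {Γ m f' A es n Γ'} : VarTy (bar Γ) m f' A → SubTy Γ es n Γ' →
      SubTy Γ ((m,f',Flag.I)::es) n ((A,CFlag.i)::Γ')
  | consL {Γ Γ₁ Γ₂ m f' A es n Γ'} : Split Γ Γ₁ Γ₂ → VarTy Γ₁ m f' A → SubTy Γ₂ es n Γ' →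
      SubTy Γ ((m,f',Flag.L)::es) n ((A,CFlag.l)::Γ')
  | consA {Γ Γ₁ Γ₂ m f' A es n Γ'} : Split Γ Γ₁ Γ₂ → NoLin Γ₁ → VarTy Γ₁ m f' A →
      SubTy Γ₂ es n Γ' → SubTy Γ ((m,f',Flag.A)::es) n ((A,CFlag.a)::Γ')
  | consUL {Γ m f' A es n Γ'} : VarTyR Γ m f' A → SubTy Γ es n Γ' →
      SubTy Γ ((m,f',Flag.L)::es) n ((A,CFlag.ul)::Γ')
  | consUA {Γ m f' A es n Γ'} : VarTyR Γ m f' A → f' ≠ Flag.L → SubTy Γ es n Γ' →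
      SubTy Γ ((m,f',Flag.A)::es) n ((A,CFlag.ua)::Γ')

/-- Pattern substitution: distinct de Bruijn indices, no linear-changing extension. -/
def PatternSub (es : SubE) : Prop :=
  es.Pairwise (fun a b => a.1 ≠ b.1) ∧ ∀ e ∈ es, e.2.1 = e.2.2 ∧ 1 ≤ e.1

/-- Terms (canonical forms), with logic variables `lvar X es sh` under a
    substitution consisting of variable entries `es` and a trailing shift `sh`. -/
inductive Tm
  | var (n : ℕ) (f : Flag)
  | lvar (X : ℕ) (es : SubE) (sh : ℕ)
  | pair (M N : Tm)
  | fst (M : Tm)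
  | snd (M : Tm)
  | lamL (M : Tm)
  | lamA (M : Tm)
  | lamI (M : Tm)
  | appL (M N : Tm)
  | appA (M N : Tm)
  | appI (M N : Tm)
deriving DecidableEq

/-- Bidirectional typing of canonical terms, with assignments ΓX, AX of contexts
    and types to logic variables. -/
inductive HasTy (ΓX : ℕ → Ctx) (AX : ℕ → Ty) : Ctx → Tm → Ty → Prop
  | var {Γ n f A} : VarTy Γ n f A → HasTy ΓX AX Γ (.var n f) A
  | lvar {Γ es sh X} : SubTy Γ es sh (ΓX X) → HasTy ΓX AX Γ (.lvar X es sh) (AX X)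
  | pair {Γ M N A B} : HasTy ΓX AX Γ M A → HasTy ΓX AX Γ N B →
      HasTy ΓX AX Γ (.pair M N) (.withT A B)
  | fst {Γ M A B} : HasTy ΓX AX Γ M (.withT A B) → HasTy ΓX AX Γ (.fst M) A
  | snd {Γ M A B} : HasTy ΓX AX Γ M (.withT A B) → HasTy ΓX AX Γ (.snd M) B
  | lamL {Γ M A B} : HasTy ΓX AX ((A,CFlag.l)::Γ) M B → HasTy ΓX AX Γ (.lamL M) (.lolli A B)
  | lamA {Γ M A B} : HasTy ΓX AX ((A,CFlag.a)::Γ) M B → HasTy ΓX AX Γ (.lamA M) (.affarr A B)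
  | lamI {Γ M A B} : HasTy ΓX AX ((A,CFlag.i)::Γ) M B → HasTy ΓX AX Γ (.lamI M) (.arr A B)
  | appL {Γ Γ₁ Γ₂ M N A B} : Split Γ Γ₁ Γ₂ → HasTy ΓX AX Γ₁ M (.lolli A B) →
      HasTy ΓX AX Γ₂ N A → HasTy ΓX AX Γ (.appL M N) B
  | appA {Γ Γ₁ Γ₂ M N A B} : Split Γ Γ₁ Γ₂ → NoLin Γ₂ → HasTy ΓX AX Γ₁ M (.affarr A B) →
      HasTy ΓX AX Γ₂ N A → HasTy ΓX AX Γ (.appA M N) B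
  | appI {Γ M N A B} : HasTy ΓX AX Γ M (.arr A B) → HasTy ΓX AX (bar Γ) N A →
      HasTy ΓX AX Γ (.appI M N) B

/-- All logic-variable substitutions occurring in a term are pattern substitutions. -/
def PatternTm : Tm → Prop
  | .var _ _ => True
  | .lvar _ es _ => PatternSub es
  | .pair M N => PatternTm M ∧ PatternTm N
  | .fst M => PatternTm M
  | .snd M => PatternTm M
  | .lamL M => PatternTm M
  | .lamA M => PatternTm M
  | .lamI M => PatternTm M
  | .appL M N => PatternTm M ∧ PatternTm N
  | .appA M N => PatternTm M ∧ PatternTm N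
  | .appI M N => PatternTm M ∧ PatternTm N

/-- Occurrence n ∈ M of a variable in a term (flexible occurrences included). -/
inductive Occurs : ℕ → Tm → Prop
  | var {n f} : Occurs n (.var n f)
  | lvar {n X es sh e} : e ∈ es → e.1 = n → Occurs n (.lvar X es sh)
  | pairl {n M N} : Occurs n M → Occurs n (.pair M N)
  | pairr {n M N} : Occurs n N → Occurs n (.pair M N)
  | fst {n M} : Occurs n M → Occurs n (.fst M)
  | snd {n M} : Occurs n M → Occurs n (.snd M)
  | lamL {n M} : Occurs (n+1) M → Occurs n (.lamL M)
  | lamA {n M} : Occurs (n+1) M → Occurs n (.lamA M)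
  | lamI {n M} : Occurs (n+1) M → Occurs n (.lamI M)
  | appLl {n M N} : Occurs n M → Occurs n (.appL M N)
  | appLr {n M N} : Occurs n N → Occurs n (.appL M N)
  | appAl {n M N} : Occurs n M → Occurs n (.appA M N)
  | appAr {n M N} : Occurs n N → Occurs n (.appA M N)
  | appIl {n M N} : Occurs n M → Occurs n (.appI M N)
  | appIr {n M N} : Occurs n N → Occurs n (.appI M N)

/-- Rigid occurrence n ∈_rig M: occurrence not inside a logic variable. -/
inductive RigidOccurs : ℕ → Tm → Prop
  | var {n f} : RigidOccurs n (.var n f)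
  | pairl {n M N} : RigidOccurs n M → RigidOccurs n (.pair M N)
  | pairr {n M N} : RigidOccurs n N → RigidOccurs n (.pair M N)
  | fst {n M} : RigidOccurs n M → RigidOccurs n (.fst M)
  | snd {n M} : RigidOccurs n M → RigidOccurs n (.snd M)
  | lamL {n M} : RigidOccurs (n+1) M → RigidOccurs n (.lamL M)
  | lamA {n M} : RigidOccurs (n+1) M → RigidOccurs n (.lamA M)
  | lamI {n M} : RigidOccurs (n+1) M → RigidOccurs n (.lamI M)
  | appLl {n M N} : RigidOccurs n M → RigidOccurs n (.appL M N)
  | appLr {n M N} : RigidOccurs n N → RigidOccurs n (.appL M N)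
  | appAl {n M N} : RigidOccurs n M → RigidOccurs n (.appA M N)
  | appAr {n M N} : RigidOccurs n N → RigidOccurs n (.appA M N)
  | appIl {n M N} : RigidOccurs n M → RigidOccurs n (.appI M N)
  | appIr {n M N} : RigidOccurs n N → RigidOccurs n (.appI M N)

/-- Occurrence of a logic variable X in a term. -/
inductive HasLvar : ℕ → Tm → Prop
  | lvar {X es sh} : HasLvar X (.lvar X es sh)
  | pairl {X M N} : HasLvar X M → HasLvar X (.pair M N)
  | pairr {X M N} : HasLvar X N → HasLvar X (.pair M N)
  | fst {X M} : HasLvar X M → HasLvar X (.fst M)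
  | snd {X M} : HasLvar X M → HasLvar X (.snd M)
  | lamL {X M} : HasLvar X M → HasLvar X (.lamL M)
  | lamA {X M} : HasLvar X M → HasLvar X (.lamA M)
  | lamI {X M} : HasLvar X M → HasLvar X (.lamI M)
  | appLl {X M N} : HasLvar X M → HasLvar X (.appL M N)
  | appLr {X M N} : HasLvar X N → HasLvar X (.appL M N)
  | appAl {X M N} : HasLvar X M → HasLvar X (.appA M N)
  | appAr {X M N} : HasLvar X N → HasLvar X (.appA M N)
  | appIl {X M N} : HasLvar X M → HasLvar X (.appI M N)
  | appIr {X M N} : HasLvar X N → HasLvar X (.appI M N)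

/-- Look up a (1-based) variable index in a substitution es.↑^sh,
    returning the new index and variable flag. -/
def lookupE (es : SubE) (sh : ℕ) (n : ℕ) (f : Flag) : ℕ × Flag :=
  match es[n-1]? with
  | some e => (e.1, e.2.1)
  | none => (n - es.length + sh, f)

/-- Extend a substitution under a binder: 1^{ff}.(s ∘ ↑). -/
def extSub (es : SubE) (f : Flag) : SubE := (1, f, f) :: shiftE es

/-- Apply a substitution (of the variable-entry form) to a term. -/
def applySub (es : SubE) (sh : ℕ) : Tm → Tm
  | .var n f => .var (lookupE es sh n f).1 (lookupE es sh n f).2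
  | .lvar X ts _ =>
      .lvar X (ts.map fun e => ((lookupE es sh e.1 e.2.1).1, (lookupE es sh e.1 e.2.1).2, e.2.2)) sh
  | .pair M N => .pair (applySub es sh M) (applySub es sh N)
  | .fst M => .fst (applySub es sh M)
  | .snd M => .snd (applySub es sh M)
  | .lamL M => .lamL (applySub (extSub es .L) (sh+1) M)
  | .lamA M => .lamA (applySub (extSub es .A) (sh+1) M)
  | .lamI M => .lamI (applySub (extSub es .I) (sh+1) M)
  | .appL M N => .appL (applySub es sh M) (applySub es sh N)
  | .appA M N => .appA (applySub es sh M) (applySub es sh N)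
  | .appI M N => .appI (applySub es sh M) (applySub es sh N)

/-- Instantiation [X ← N]M of a logic variable. -/
def inst (X : ℕ) (N : Tm) : Tm → Tm
  | .var n f => .var n f
  | .lvar Y es sh => if Y = X then applySub es sh N else .lvar Y es sh
  | .pair M M' => .pair (inst X N M) (inst X N M')
  | .fst M => .fst (inst X N M)
  | .snd M => .snd (inst X N M)
  | .lamL M => .lamL (inst X N M)
  | .lamA M => .lamA (inst X N M)
  | .lamI M => .lamI (inst X N M)
  | .appL M M' => .appL (inst X N M) (inst X N M')
  | .appA M M' => .appA (inst X N M) (inst X N M')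
  | .appI M M' => .appI (inst X N M) (inst X N M')


/-- The inverse of a pattern substitution es.↑^{sh} over a domain of n
    assumptions: entry j is i^{f_i f_i} when the i-th entry of es is j^{f_i}
    (undefined entries are filled arbitrarily). -/
def invSub (es : SubE) (n : ℕ) : SubE :=
  (List.range n).map fun j =>
    match (es.zipIdx.map fun q => (q.2, q.1)).find? (fun p => p.2.1 = j + 1) with
    | some p => (p.1 + 1, p.2.2.1, p.2.2.1)
    | none => (0, Flag.I, Flag.I)

-- ===== Part 1: basic lemmas =====
set_option linter.constructorNameAsVariable false

theorem cToF_flagC (f : Flag) : cToF (flagC f) = f := by cases f <;> rfl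

theorem set_same {α : Type} {l : List α} {k : ℕ} {v : α} (h : l[k]? = some v) :
    l.set k v = l := by
  induction l generalizing k with
  | nil => simp at h
  | cons a l ih =>
    cases k with
    | zero => simp_all
    | succ k => simp only [List.getElem?_cons_succ] at h; simp [ih h]

theorem varTy_get {Γ : Ctx} {n f A} (h : VarTy Γ n f A) :
    1 ≤ n ∧ Γ[n-1]? = some (A, flagC f) := by
  induction h with
  | here _ => exact ⟨le_refl 1, by simp⟩
  | @there Γ B l n f A h hl ih =>
    obtain ⟨h1, h2⟩ := ih
    refine ⟨by omega, ?_⟩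
    rw [show n + 1 - 1 = (n - 1) + 1 by omega, List.getElem?_cons_succ]; exact h2

theorem varTy_ne_l {Γ : Ctx} {n f A} (h : VarTy Γ n f A) :
    ∀ k e, k ≠ n - 1 → Γ[k]? = some e → e.2 ≠ CFlag.l := by
  induction h with
  | @here Γ A f hnl =>
    intro k e hk he
    cases k with
    | zero => omega
    | succ k =>
      simp only [List.getElem?_cons_succ] at he
      exact hnl e (List.mem_iff_getElem?.2 ⟨k, he⟩)
  | @there Γ B l n f A h hl ih =>
    intro k e hk he
    have hn := (varTy_get h).1
    cases k with
    | zero => simp at he; subst he; exact hl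
    | succ k =>
      simp only [List.getElem?_cons_succ] at he
      exact ih k e (by omega) he

theorem varTy_of_get {Γ : Ctx} {k : ℕ} {f A}
    (h1 : Γ[k]? = some (A, flagC f))
    (h2 : ∀ j e, j ≠ k → Γ[j]? = some e → e.2 ≠ CFlag.l) :
    VarTy Γ (k+1) f A := by
  induction Γ generalizing k with
  | nil => simp at h1
  | cons a Γ ih =>
    cases k with
    | zero =>
      simp at h1; subst h1
      exact VarTy.here (fun e he => by
        obtain ⟨j, hj⟩ := List.mem_iff_getElem?.1 he
        exact h2 (j+1) e (by omega) (by simpa using hj))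
    | succ k =>
      simp only [List.getElem?_cons_succ] at h1
      have := ih h1 (fun j e hj he => h2 (j+1) e (by omega) (by simpa using he))
      exact VarTy.there this (by
        have := h2 0 a (by omega) (by simp)
        intro hc; exact this (by rw [← hc]))

theorem varTyR_iff {Γ : Ctx} {n f A} :
    VarTyR Γ n f A ↔ 1 ≤ n ∧ ∃ c, Γ[n-1]? = some (A, c) ∧ cToF c = f := by
  constructor
  · intro h
    induction h with
    | here hc => exact ⟨le_refl 1, _, by simp, hc⟩
    | @there Γ B l n f A h ih =>
      obtain ⟨h1, c, h2, h3⟩ := ih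
      refine ⟨by omega, c, ?_, h3⟩
      rw [show n + 1 - 1 = (n - 1) + 1 by omega, List.getElem?_cons_succ]; exact h2
  · rintro ⟨h1, c, h2, h3⟩
    induction Γ generalizing n with
    | nil => simp at h2
    | cons a Γ ih =>
      match n, h1 with
      | 1, _ => simp at h2; subst h2; exact VarTyR.here h3
      | (n+2), _ =>
        rw [show n+2-1 = (n+1-1)+1 by omega, List.getElem?_cons_succ] at h2
        exact VarTyR.there (ih (by omega) h2)

/-- Pointwise splitting of flags. -/
inductive SplitF : CFlag → CFlag → CFlag → Prop
  | int : SplitF .i .i .i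
  | ulin : SplitF .ul .ul .ul
  | uaff : SplitF .ua .ua .ua
  | linl : SplitF .l .l .ul
  | linr : SplitF .l .ul .l
  | affl : SplitF .a .a .ua
  | affr : SplitF .a .ua .a

theorem cToF_splitF {c c₁ c₂ : CFlag} (h : SplitF c c₁ c₂) :
    cToF c₁ = cToF c ∧ cToF c₂ = cToF c := by cases h <;> exact ⟨rfl, rfl⟩

theorem splitF_self {c : CFlag} (h : c = .i ∨ c = .ua ∨ c = .ul) : SplitF c c c := by
  rcases h with h|h|h <;> subst h
  exacts [SplitF.int, SplitF.uaff, SplitF.ulin]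

theorem split_length {Γ Γ₁ Γ₂ : Ctx} (h : Split Γ Γ₁ Γ₂) :
    Γ₁.length = Γ.length ∧ Γ₂.length = Γ.length := by
  induction h <;> simp_all

theorem split_get {Γ Γ₁ Γ₂ : Ctx} (h : Split Γ Γ₁ Γ₂) :
    ∀ (k : ℕ) (e : Ty × CFlag), Γ[k]? = some e →
      ∃ c₁ c₂, Γ₁[k]? = some (e.1, c₁) ∧ Γ₂[k]? = some (e.1, c₂) ∧ SplitF e.2 c₁ c₂ := by
  induction h with
  | nil => intro k e he; simp at he
  | int h ih | ulin h ih | uaff h ih | linl h ih | linr h ih | affl h ih | affr h ih =>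
    intro k e he
    cases k with
    | zero =>
      simp at he; subst he
      exact ⟨_, _, List.getElem?_cons_zero, List.getElem?_cons_zero, by constructor⟩
    | succ k =>
      simp only [List.getElem?_cons_succ] at he ⊢
      exact ih k e he

theorem split_of_pointwise {Γ Γ₁ Γ₂ : Ctx}
    (h1 : Γ₁.length = Γ.length) (h2 : Γ₂.length = Γ.length)
    (h : ∀ (k : ℕ) (e e₁ e₂ : Ty × CFlag), Γ[k]? = some e → Γ₁[k]? = some e₁ →
      Γ₂[k]? = some e₂ → e₁.1 = e.1 ∧ e₂.1 = e.1 ∧ SplitF e.2 e₁.2 e₂.2) :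
    Split Γ Γ₁ Γ₂ := by
  induction Γ generalizing Γ₁ Γ₂ with
  | nil =>
    cases Γ₁ with
    | nil => cases Γ₂ with
      | nil => exact Split.nil
      | cons => simp at h2
    | cons => simp at h1
  | cons a Γ ih =>
    match Γ₁, Γ₂ with
    | [], _ => simp at h1
    | _::_, [] => simp at h2
    | b::Γ₁, c::Γ₂ =>
      obtain ⟨hb, hc, hs⟩ := h 0 a b c (by simp) (by simp) (by simp)
      have htail := ih (by simpa using h1) (by simpa using h2)
        (fun k e e₁ e₂ he he1 he2 => h (k+1) e e₁ e₂ (by simpa using he)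
          (by simpa using he1) (by simpa using he2))
      obtain ⟨A, ca⟩ := a; obtain ⟨B, cb⟩ := b; obtain ⟨C, cc⟩ := c
      simp only at hb hc hs; subst hb; subst hc
      cases hs
      exacts [Split.int htail, Split.ulin htail, Split.uaff htail, Split.linl htail,
        Split.linr htail, Split.affl htail, Split.affr htail]

-- ===== Part 2: SubTy structural lemmas =====

def barF : CFlag → CFlag | .l => .ul | .a => .ua | c => c

theorem bar_eq_map (Γ : Ctx) : bar Γ = Γ.map (fun e => (e.1, barF e.2)) := by
  unfold bar barF
  apply List.map_congr_left
  intro e _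
  cases e with | mk A c => cases c <;> rfl

theorem bar_get (Γ : Ctx) (k : ℕ) :
    (bar Γ)[k]? = Γ[k]?.map (fun e => (e.1, barF e.2)) := by
  rw [bar_eq_map, List.getElem?_map]

theorem cToF_barF (c : CFlag) : cToF (barF c) = cToF c := by cases c <;> rfl

theorem barF_used (c : CFlag) : barF c = .i ∨ barF c = .ua ∨ barF c = .ul := by
  cases c <;> simp [barF]

theorem bar_length (Γ : Ctx) : (bar Γ).length = Γ.length := by
  rw [bar_eq_map]; simp

theorem getElem?_of_lt {α : Type} {Γ : List α} {k : ℕ} (h : k < Γ.length) :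
    ∃ e, Γ[k]? = some e :=
  ⟨Γ[k], List.getElem?_eq_some_iff.2 ⟨h, rfl⟩⟩

theorem split_tr₁ {Γ Γ₁ Γ₂ : Ctx} (h : Split Γ Γ₁ Γ₂) {k : ℕ} {A : Ty} {c₁ : CFlag}
    (hk : Γ₁[k]? = some (A, c₁)) :
    ∃ c, Γ[k]? = some (A, c) ∧ cToF c = cToF c₁ := by
  have hlt : k < Γ.length := by
    have h1 := (List.getElem?_eq_some_iff.1 hk).1
    have h2 := (split_length h).1
    omega
  obtain ⟨e, he⟩ := getElem?_of_lt hlt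
  obtain ⟨d₁, d₂, he1, he2, hs⟩ := split_get h k e he
  rw [hk] at he1
  obtain ⟨B, c⟩ := e
  simp only [Option.some.injEq, Prod.mk.injEq] at he1
  obtain ⟨hBA, hdc⟩ := he1
  refine ⟨c, by rw [he, hBA], ?_⟩
  rw [hdc]
  exact ((cToF_splitF hs).1).symm

theorem split_tr₂ {Γ Γ₁ Γ₂ : Ctx} (h : Split Γ Γ₁ Γ₂) {k : ℕ} {A : Ty} {c₂ : CFlag}
    (hk : Γ₂[k]? = some (A, c₂)) :
    ∃ c, Γ[k]? = some (A, c) ∧ cToF c = cToF c₂ := by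
  have hlt : k < Γ.length := by
    have h1 := (List.getElem?_eq_some_iff.1 hk).1
    have h2 := (split_length h).2
    omega
  obtain ⟨e, he⟩ := getElem?_of_lt hlt
  obtain ⟨d₁, d₂, he1, he2, hs⟩ := split_get h k e he
  rw [hk] at he2
  obtain ⟨B, c⟩ := e
  simp only [Option.some.injEq, Prod.mk.injEq] at he2
  obtain ⟨hBA, hdc⟩ := he2
  refine ⟨c, by rw [he, hBA], ?_⟩
  rw [hdc]
  exact ((cToF_splitF hs).2).symm

theorem subTy_sh {Γ : Ctx} {es n Γ'} (h : SubTy Γ es n Γ') : n = Γ.length := by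
  induction h with
  | nil => rfl
  | shift h _ ih => simp [ih]
  | consI _ _ ih => exact ih
  | consL hs _ _ ih => rw [ih, (split_length hs).2]
  | consA hs _ _ _ ih => rw [ih, (split_length hs).2]
  | consUL _ _ ih => exact ih
  | consUA _ _ _ ih => exact ih

theorem subTy_len {Γ : Ctx} {es n Γ'} (h : SubTy Γ es n Γ') :
    Γ'.length = es.length := by
  induction h <;> simp_all

theorem subTy_nil_inv {Γ : Ctx} {es : SubE} {n Γ'} (h : SubTy Γ es n Γ') (hes : es = []) :
    Γ' = [] ∧ ∀ e ∈ Γ, e.2 ≠ CFlag.l := by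
  induction h with
  | nil => exact ⟨rfl, by simp⟩
  | shift h hl ih =>
    obtain ⟨h1, h2⟩ := ih rfl
    refine ⟨h1, fun e he => ?_⟩
    rcases List.mem_cons.1 he with rfl | he'
    · exact hl
    · exact h2 e he'
  | _ => simp_all

theorem subTy_nil_of {Γ : Ctx} (h : ∀ e ∈ Γ, e.2 ≠ CFlag.l) :
    SubTy Γ [] Γ.length [] := by
  induction Γ with
  | nil => exact SubTy.nil
  | cons a Γ ih =>
    exact SubTy.shift (ih (fun e he => h e (by simp [he]))) (h a (by simp))

-- ===== Part 3: entry facts, linear consumption =====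

theorem subTy_entry {Γ : Ctx} {es n Γ'} (h : SubTy Γ es n Γ') :
    ∀ e ∈ es, 1 ≤ e.1 ∧ ∃ A c, Γ[e.1-1]? = some (A, c) ∧ cToF c = e.2.1 := by
  induction h with
  | nil => simp
  | shift h hl ih => simp
  | @consI Γ m f' A es n Γ' hv h ih =>
    intro e he
    rcases List.mem_cons.1 he with rfl | he'
    · obtain ⟨h1, h2⟩ := varTy_get hv
      rw [bar_get] at h2
      match hΓ : Γ[m-1]? with
      | none => rw [hΓ] at h2; simp at h2
      | some e₀ =>
        rw [hΓ] at h2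
        obtain ⟨B, c⟩ := e₀
        simp only [Option.map_some, Option.some.injEq, Prod.mk.injEq] at h2
        exact ⟨h1, B, c, rfl, by rw [← cToF_barF, h2.2, cToF_flagC]⟩
    · exact ih e he'
  | @consL Γ Γ₁ Γ₂ m f' A es n Γ' hs hv h ih =>
    intro e he
    rcases List.mem_cons.1 he with rfl | he'
    · obtain ⟨h1, h2⟩ := varTy_get hv
      obtain ⟨c, hc, hcf⟩ := split_tr₁ hs h2
      exact ⟨h1, A, c, hc, by rw [hcf, cToF_flagC]⟩
    · obtain ⟨h1, B, c, hc, hcf⟩ := ih e he'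
      obtain ⟨c', hc', hcf'⟩ := split_tr₂ hs hc
      exact ⟨h1, B, c', hc', by rw [hcf', hcf]⟩
  | @consA Γ Γ₁ Γ₂ m f' A es n Γ' hs hnl hv h ih =>
    intro e he
    rcases List.mem_cons.1 he with rfl | he'
    · obtain ⟨h1, h2⟩ := varTy_get hv
      obtain ⟨c, hc, hcf⟩ := split_tr₁ hs h2
      exact ⟨h1, A, c, hc, by rw [hcf, cToF_flagC]⟩
    · obtain ⟨h1, B, c, hc, hcf⟩ := ih e he'
      obtain ⟨c', hc', hcf'⟩ := split_tr₂ hs hc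
      exact ⟨h1, B, c', hc', by rw [hcf', hcf]⟩
  | @consUL Γ m f' A es n Γ' hv h ih =>
    intro e he
    rcases List.mem_cons.1 he with rfl | he'
    · obtain ⟨h1, c, h2, h3⟩ := varTyR_iff.1 hv
      exact ⟨h1, A, c, h2, h3⟩
    · exact ih e he'
  | @consUA Γ m f' A es n Γ' hv hne h ih =>
    intro e he
    rcases List.mem_cons.1 he with rfl | he'
    · obtain ⟨h1, c, h2, h3⟩ := varTyR_iff.1 hv
      exact ⟨h1, A, c, h2, h3⟩
    · exact ih e he'

theorem subTy_lin {Γ : Ctx} {es n Γ'} (h : SubTy Γ es n Γ') :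
    ∀ k A, Γ[k]? = some (A, CFlag.l) → ∃ e ∈ es, e.1 = k + 1 := by
  induction h with
  | nil => intro k A hk; simp at hk
  | @shift Γ B l n Γ' h hl ih =>
    intro k A hk
    cases k with
    | zero => simp at hk; exact absurd hk.2 hl
    | succ k =>
      simp only [List.getElem?_cons_succ] at hk
      obtain ⟨e, he, _⟩ := ih k A hk
      simp at he
  | @consI Γ m f' A es n Γ' hv h ih =>
    intro k B hk
    obtain ⟨e, he, h1⟩ := ih k B hk
    exact ⟨e, List.mem_cons_of_mem _ he, h1⟩
  | @consL Γ Γ₁ Γ₂ m f' A es n Γ' hs hv h ih =>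
    intro k B hk
    obtain ⟨c₁, c₂, h1, h2, hsf⟩ := split_get hs k (B, .l) hk
    cases hsf with
    | linl =>
      have hm := varTy_get hv
      by_cases hkm : k = m - 1
      · exact ⟨(m, f', Flag.L), List.mem_cons_self, by omega⟩
      · exact absurd rfl (varTy_ne_l hv k (B, .l) hkm h1)
    | linr =>
      obtain ⟨e, he, h3⟩ := ih k B h2
      exact ⟨e, List.mem_cons_of_mem _ he, h3⟩
  | @consA Γ Γ₁ Γ₂ m f' A es n Γ' hs hnl hv h ih =>
    intro k B hk
    obtain ⟨c₁, c₂, h1, h2, hsf⟩ := split_get hs k (B, .l) hk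
    cases hsf with
    | linl => exact absurd rfl (hnl (B, .l) (List.mem_iff_getElem?.2 ⟨k, h1⟩))
    | linr =>
      obtain ⟨e, he, h3⟩ := ih k B h2
      exact ⟨e, List.mem_cons_of_mem _ he, h3⟩
  | @consUL Γ m f' A es n Γ' hv h ih =>
    intro k B hk
    obtain ⟨e, he, h1⟩ := ih k B hk
    exact ⟨e, List.mem_cons_of_mem _ he, h1⟩
  | @consUA Γ m f' A es n Γ' hv hne h ih =>
    intro k B hk
    obtain ⟨e, he, h1⟩ := ih k B hk
    exact ⟨e, List.mem_cons_of_mem _ he, h1⟩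

-- ===== Part 4: set-preservation, weakening, strengthening =====

theorem getElem?_set_self' {α : Type} {l : List α} {k : ℕ} {v : α} (h : k < l.length) :
    (l.set k v)[k]? = some v := by
  rw [List.getElem?_set]; simp [h]

theorem varTy_set {Γ : Ctx} {m f A k} (hv : VarTy Γ m f A) (hk : k ≠ m - 1)
    (e' : Ty × CFlag) (hl : e'.2 ≠ CFlag.l) : VarTy (Γ.set k e') m f A := by
  obtain ⟨h1, h2⟩ := varTy_get hv
  have hget : (Γ.set k e')[m-1]? = some (A, flagC f) := by
    rw [List.getElem?_set_ne hk]; exact h2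
  have := varTy_of_get hget (fun j e hj he => by
    by_cases hjk : j = k
    · subst hjk
      by_cases hlen : j < Γ.length
      · rw [getElem?_set_self' hlen] at he
        cases he; exact hl
      · rw [List.getElem?_eq_none (by simpa using hlen)] at he
        cases he
    · rw [List.getElem?_set_ne (fun h => hjk h.symm)] at he
      exact varTy_ne_l hv j e hj he)
  rwa [show m - 1 + 1 = m by omega] at this

theorem varTyR_set {Γ : Ctx} {m f A k B c c''} (hv : VarTyR Γ m f A)
    (hB : Γ[k]? = some (B, c)) (hc : cToF c'' = cToF c) :
    VarTyR (Γ.set k (B, c'')) m f A := by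
  obtain ⟨h1, c₀, h2, h3⟩ := varTyR_iff.1 hv
  apply varTyR_iff.2
  refine ⟨h1, ?_⟩
  by_cases hk : k = m - 1
  · subst hk
    rw [h2] at hB; cases hB
    exact ⟨c'', getElem?_set_self' (List.getElem?_eq_some_iff.1 h2).1, by rw [hc]; exact h3⟩
  · exact ⟨c₀, by rw [List.getElem?_set_ne hk]; exact h2, h3⟩

theorem noLin_set {Γ : Ctx} (h : NoLin Γ) {k B c'} (hc : c' ≠ CFlag.l) :
    NoLin (Γ.set k (B, c')) := by
  intro e he
  rcases List.mem_or_eq_of_mem_set he with he' | rfl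
  · exact h e he'
  · exact hc

theorem split_set {Γ Γ₁ Γ₂ : Ctx} (h : Split Γ Γ₁ Γ₂) {k : ℕ} {B : Ty} {c : CFlag}
    (hk : Γ[k]? = some (B, c)) {c' c₁' c₂' : CFlag} (hs : SplitF c' c₁' c₂') :
    Split (Γ.set k (B, c')) (Γ₁.set k (B, c₁')) (Γ₂.set k (B, c₂')) := by
  obtain ⟨hl1, hl2⟩ := split_length h
  have hklen : k < Γ.length := (List.getElem?_eq_some_iff.1 hk).1
  apply split_of_pointwise (by simp [hl1]) (by simp [hl2])
  intro j e e₁ e₂ he he1 he2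
  by_cases hjk : j = k
  · subst hjk
    rw [getElem?_set_self' hklen] at he
    rw [getElem?_set_self' (by omega)] at he1
    rw [getElem?_set_self' (by omega)] at he2
    cases he; cases he1; cases he2
    exact ⟨rfl, rfl, hs⟩
  · rw [List.getElem?_set_ne (fun h => hjk h.symm)] at he he1 he2
    obtain ⟨d₁, d₂, hd1, hd2, hsf⟩ := split_get h j e he
    rw [hd1] at he1; rw [hd2] at he2
    cases he1; cases he2
    exact ⟨rfl, rfl, hsf⟩

theorem subTy_weaken_a {Γ : Ctx} {es n Γ'} (h : SubTy Γ es n Γ') :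
    ∀ k B, Γ[k]? = some (B, CFlag.a) → (∀ e ∈ es, e.1 ≠ k + 1) →
    SubTy (Γ.set k (B, CFlag.ua)) es n Γ' := by
  induction h with
  | nil => intro k B hk; simp at hk
  | @shift Γ B₀ l n Γ' h hl ih =>
    intro k B hk hne
    cases k with
    | zero =>
      simp at hk
      obtain ⟨rfl, rfl⟩ := hk
      exact SubTy.shift h (by simp)
    | succ k =>
      simp only [List.getElem?_cons_succ] at hk
      exact SubTy.shift (ih k B hk (by simp)) hl
  | @consI Γ m f' A es n Γ' hv h ih =>
    intro k B hk hne
    have hbar : bar (Γ.set k (B, CFlag.ua)) = bar Γ := by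
      rw [bar_eq_map, List.map_set, ← bar_eq_map]
      exact set_same (by rw [bar_get, hk]; rfl)
    refine SubTy.consI (by rw [hbar]; exact hv) (ih k B hk ?_)
    intro e he; exact hne e (List.mem_cons_of_mem _ he)
  | @consL Γ Γ₁ Γ₂ m f' A es n Γ' hs hv h ih =>
    intro k B hk hne
    obtain ⟨c₁, c₂, h1, h2, hsf⟩ := split_get hs k (B, .a) hk
    have hm : m ≠ k + 1 := hne _ (List.mem_cons_self)
    have hm1 := (varTy_get hv).1
    have hv' : VarTy (Γ₁.set k (B, CFlag.ua)) m f' A :=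
      varTy_set hv (by omega) _ (by simp)
    have htail : SubTy (Γ₂.set k (B, CFlag.ua)) es n Γ' := by
      cases hsf with
      | affl => rw [set_same h2]; exact h
      | affr => exact ih k B h2 (fun e he => hne e (List.mem_cons_of_mem _ he))
    exact SubTy.consL (split_set hs hk SplitF.uaff) hv' htail
  | @consA Γ Γ₁ Γ₂ m f' A es n Γ' hs hnl hv h ih =>
    intro k B hk hne
    obtain ⟨c₁, c₂, h1, h2, hsf⟩ := split_get hs k (B, .a) hk
    have hm : m ≠ k + 1 := hne _ (List.mem_cons_self)
    have hm1 := (varTy_get hv).1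
    have hv' : VarTy (Γ₁.set k (B, CFlag.ua)) m f' A :=
      varTy_set hv (by omega) _ (by simp)
    have htail : SubTy (Γ₂.set k (B, CFlag.ua)) es n Γ' := by
      cases hsf with
      | affl => rw [set_same h2]; exact h
      | affr => exact ih k B h2 (fun e he => hne e (List.mem_cons_of_mem _ he))
    exact SubTy.consA (split_set hs hk SplitF.uaff) (noLin_set hnl (by simp)) hv' htail
  | @consUL Γ m f' A es n Γ' hv h ih =>
    intro k B hk hne
    exact SubTy.consUL (varTyR_set hv hk rfl)
      (ih k B hk (fun e he => hne e (List.mem_cons_of_mem _ he)))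
  | @consUA Γ m f' A es n Γ' hv hf h ih =>
    intro k B hk hne
    exact SubTy.consUA (varTyR_set hv hk rfl) hf
      (ih k B hk (fun e he => hne e (List.mem_cons_of_mem _ he)))

-- ===== Part 5: strengthening ua -> a =====

theorem splitF_bar (c : CFlag) : SplitF c (barF c) c := by
  cases c <;> constructor

theorem noLin_bar (Γ : Ctx) : NoLin (bar Γ) := by
  intro e he
  rw [bar_eq_map] at he
  obtain ⟨x, _, rfl⟩ := List.mem_map.1 he
  rcases barF_used x.2 with h|h|h <;> simp [h]

theorem subTy_strengthen {Γ : Ctx} {es n Γ'} (h : SubTy Γ es n Γ') :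
    ∀ i m g B ca, es[i]? = some (m, Flag.A, g) → Γ[m-1]? = some (B, ca) →
    (ca = CFlag.a ∨ ca = CFlag.ua) → Γ'[i]? = some (B, CFlag.ua) →
    (∀ j e, j ≠ i → es[j]? = some e → e.1 ≠ m) → 1 ≤ m →
    SubTy (Γ.set (m-1) (B, CFlag.a)) es n (Γ'.set i (B, CFlag.a)) := by
  induction h with
  | nil => intro i m g B ca he; simp at he
  | shift h hl ih => intro i m g B ca he; simp at he
  | @consI Γ m₀ f₀ A es n Γ' hv h ih =>
    intro i m g B ca he hΓ hca hΓ' hne hm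
    cases i with
    | zero => simp at he hΓ'
    | succ j =>
      simp only [List.getElem?_cons_succ] at he hΓ'
      have hm₀ : m₀ ≠ m := hne 0 (m₀, f₀, Flag.I) (by omega) (by simp)
      have hm₀1 := (varTy_get hv).1
      have htail := ih j m g B ca he hΓ hca hΓ'
        (fun j' e hj' he' => hne (j'+1) e (by omega) (by simpa using he')) hm
      have hbar : bar (Γ.set (m-1) (B, CFlag.a)) = (bar Γ).set (m-1) (B, CFlag.ua) := by
        rw [bar_eq_map, List.map_set, ← bar_eq_map]; rfl
      have hv' : VarTy (bar (Γ.set (m-1) (B, CFlag.a))) m₀ f₀ A := by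
        rw [hbar]; exact varTy_set hv (by omega) _ (by simp)
      have := SubTy.consI hv' htail
      simpa using this
  | @consL Γ Γ₁ Γ₂ m₀ f₀ A es n Γ' hs hv h ih =>
    intro i m g B ca he hΓ hca hΓ' hne hm
    cases i with
    | zero => simp at he hΓ'
    | succ j =>
      simp only [List.getElem?_cons_succ] at he hΓ'
      have hm₀ : m₀ ≠ m := hne 0 (m₀, f₀, Flag.L) (by omega) (by simp)
      have hm₀1 := (varTy_get hv).1
      obtain ⟨c₁, c₂, h1, h2, hsf⟩ := split_get hs (m-1) (B, ca) hΓ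
      have hc₂ : c₂ = CFlag.a ∨ c₂ = CFlag.ua := by
        rcases hca with rfl | rfl <;> cases hsf <;> simp
      have htail := ih j m g B c₂ he h2 hc₂ hΓ'
        (fun j' e hj' he' => hne (j'+1) e (by omega) (by simpa using he')) hm
      have hsp := split_set hs hΓ (SplitF.affr)
      have hv' : VarTy (Γ₁.set (m-1) (B, CFlag.ua)) m₀ f₀ A :=
        varTy_set hv (by omega) _ (by simp)
      have := SubTy.consL hsp hv' htail
      simpa using this
  | @consA Γ Γ₁ Γ₂ m₀ f₀ A es n Γ' hs hnl hv h ih =>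
    intro i m g B ca he hΓ hca hΓ' hne hm
    cases i with
    | zero => simp at he hΓ'
    | succ j =>
      simp only [List.getElem?_cons_succ] at he hΓ'
      have hm₀ : m₀ ≠ m := hne 0 (m₀, f₀, Flag.A) (by omega) (by simp)
      have hm₀1 := (varTy_get hv).1
      obtain ⟨c₁, c₂, h1, h2, hsf⟩ := split_get hs (m-1) (B, ca) hΓ
      have hc₂ : c₂ = CFlag.a ∨ c₂ = CFlag.ua := by
        rcases hca with rfl | rfl <;> cases hsf <;> simp
      have htail := ih j m g B c₂ he h2 hc₂ hΓ'
        (fun j' e hj' he' => hne (j'+1) e (by omega) (by simpa using he')) hm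
      have hsp := split_set hs hΓ (SplitF.affr)
      have hv' : VarTy (Γ₁.set (m-1) (B, CFlag.ua)) m₀ f₀ A :=
        varTy_set hv (by omega) _ (by simp)
      have := SubTy.consA hsp (noLin_set hnl (by simp)) hv' htail
      simpa using this
  | @consUL Γ m₀ f₀ A es n Γ' hv h ih =>
    intro i m g B ca he hΓ hca hΓ' hne hm
    cases i with
    | zero => simp at he hΓ'
    | succ j =>
      simp only [List.getElem?_cons_succ] at he hΓ'
      have htail := ih j m g B ca he hΓ hca hΓ'
        (fun j' e hj' he' => hne (j'+1) e (by omega) (by simpa using he')) hm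
      have hv' : VarTyR (Γ.set (m-1) (B, CFlag.a)) m₀ f₀ A :=
        varTyR_set hv hΓ (by rcases hca with rfl | rfl <;> rfl)
      have := SubTy.consUL hv' htail
      simpa using this
  | @consUA Γ m₀ f₀ A es n Γ' hv hf h ih =>
    intro i m g B ca he hΓ hca hΓ' hne hm
    cases i with
    | zero =>
      simp only [List.getElem?_cons_zero, Option.some.injEq, Prod.mk.injEq] at he hΓ'
      obtain ⟨rfl, rfl, rfl⟩ := he
      obtain ⟨rfl, -⟩ := hΓ'
      obtain ⟨hm1, c₀, hc₀, hcf₀⟩ := varTyR_iff.1 hv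
      rw [hΓ] at hc₀
      cases hc₀
      have hlen : m₀ - 1 < Γ.length := (List.getElem?_eq_some_iff.1 hΓ).1
      have hsp : Split (Γ.set (m₀-1) (A, CFlag.a)) ((bar Γ).set (m₀-1) (A, CFlag.a))
          (Γ.set (m₀-1) (A, CFlag.ua)) := by
        apply split_of_pointwise (by simp [bar_length]) (by simp)
        intro k e e₁ e₂ hk hk1 hk2
        by_cases hkm : k = m₀ - 1
        · subst hkm
          rw [getElem?_set_self' hlen] at hk
          rw [getElem?_set_self' (by rw [bar_length]; omega)] at hk1
          rw [getElem?_set_self' (by omega)] at hk2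
          cases hk; cases hk1; cases hk2
          exact ⟨rfl, rfl, SplitF.affl⟩
        · rw [List.getElem?_set_ne (fun h => hkm h.symm)] at hk hk1 hk2
          rw [bar_get, hk] at hk1
          rw [hk] at hk2
          cases hk1; cases hk2
          exact ⟨rfl, rfl, splitF_bar e.2⟩
      have hnl1 : NoLin ((bar Γ).set (m₀-1) (A, CFlag.a)) :=
        noLin_set (noLin_bar Γ) (by simp)
      have hv1 : VarTy ((bar Γ).set (m₀-1) (A, CFlag.a)) m₀ Flag.A A := by
        have hget : ((bar Γ).set (m₀-1) (A, CFlag.a))[m₀-1]? = some (A, flagC Flag.A) :=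
          getElem?_set_self' (by rw [bar_length]; omega)
        have := varTy_of_get hget (fun j e hj hje => by
          rw [List.getElem?_set_ne (fun h => hj h.symm)] at hje
          rw [bar_get] at hje
          match hΓj : Γ[j]? with
          | none => rw [hΓj] at hje; simp at hje
          | some e₀ =>
            rw [hΓj] at hje
            simp only [Option.map_some, Option.some.injEq] at hje
            subst hje
            rcases barF_used e₀.2 with h'|h'|h' <;> simp [h'])
        rwa [show m₀ - 1 + 1 = m₀ by omega] at this
      have htail : SubTy (Γ.set (m₀-1) (A, CFlag.ua)) es n Γ' := by
        rcases hca with rfl | rfl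
        · exact subTy_weaken_a h (m₀-1) A hΓ (fun e he' => by
            obtain ⟨j', hj'⟩ := List.mem_iff_getElem?.1 he'
            have := hne (j'+1) e (by omega) (by simpa using hj')
            omega)
        · rw [set_same hΓ]; exact h
      have := SubTy.consA hsp hnl1 hv1 htail
      simpa using this
    | succ j =>
      simp only [List.getElem?_cons_succ] at he hΓ'
      have htail := ih j m g B ca he hΓ hca hΓ'
        (fun j' e hj' he' => hne (j'+1) e (by omega) (by simpa using he')) hm
      have hv' : VarTyR (Γ.set (m-1) (B, CFlag.a)) m₀ f₀ A :=
        varTyR_set hv hΓ (by rcases hca with rfl | rfl <;> rfl)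
      have := SubTy.consUA hv' hf htail
      simpa using this

-- ===== Part 6: entry correspondence =====

theorem split_elem₁ {Γ Γ₁ Γ₂ : Ctx} (h : Split Γ Γ₁ Γ₂) {k : ℕ} {A : Ty} {c₁ : CFlag}
    (hk : Γ₁[k]? = some (A, c₁)) :
    ∃ c c₂, Γ[k]? = some (A, c) ∧ Γ₂[k]? = some (A, c₂) ∧ SplitF c c₁ c₂ := by
  have hlt : k < Γ.length := by
    have h1 := (List.getElem?_eq_some_iff.1 hk).1
    have h2 := (split_length h).1
    omega
  obtain ⟨e, he⟩ := getElem?_of_lt hlt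
  obtain ⟨d₁, d₂, hd1, hd2, hsf⟩ := split_get h k e he
  rw [hk] at hd1
  obtain ⟨B, c⟩ := e
  simp only [Option.some.injEq, Prod.mk.injEq] at hd1
  obtain ⟨hBA, hdc⟩ := hd1
  subst hBA; subst hdc
  exact ⟨c, d₂, he, hd2, hsf⟩

theorem split_elem₂ {Γ Γ₁ Γ₂ : Ctx} (h : Split Γ Γ₁ Γ₂) {k : ℕ} {A : Ty} {c₂ : CFlag}
    (hk : Γ₂[k]? = some (A, c₂)) :
    ∃ c c₁, Γ[k]? = some (A, c) ∧ Γ₁[k]? = some (A, c₁) ∧ SplitF c c₁ c₂ := by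
  have hlt : k < Γ.length := by
    have h1 := (List.getElem?_eq_some_iff.1 hk).1
    have h2 := (split_length h).2
    omega
  obtain ⟨e, he⟩ := getElem?_of_lt hlt
  obtain ⟨d₁, d₂, hd1, hd2, hsf⟩ := split_get h k e he
  rw [hk] at hd2
  obtain ⟨B, c⟩ := e
  simp only [Option.some.injEq, Prod.mk.injEq] at hd2
  obtain ⟨hBA, hdc⟩ := hd2
  subst hBA; subst hdc
  exact ⟨c, d₁, he, hd1, hsf⟩

theorem barF_eq_flagC {c : CFlag} {f : Flag} (h : barF c = flagC f) :
    c = CFlag.i ∧ f = Flag.I := by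
  cases c <;> cases f <;> simp_all [barF, flagC]

theorem cToF_L {c : CFlag} (h : cToF c = Flag.L) : c = CFlag.l ∨ c = CFlag.ul := by
  cases c <;> simp_all [cToF]

theorem cToF_A {c : CFlag} (h : cToF c = Flag.A) : c = CFlag.a ∨ c = CFlag.ua := by
  cases c <;> simp_all [cToF]

theorem pairwise_ne_get {es : SubE} (hdist : es.Pairwise (fun a b => a.1 ≠ b.1))
    {i j : ℕ} {a b : ℕ × Flag × Flag} (hij : i ≠ j) (ha : es[i]? = some a)
    (hb : es[j]? = some b) : a.1 ≠ b.1 := by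
  induction es generalizing i j with
  | nil => simp at ha
  | cons x es ih =>
    cases i with
    | zero =>
      cases j with
      | zero => omega
      | succ j =>
        simp only [List.getElem?_cons_zero, Option.some.injEq] at ha
        subst ha
        simp only [List.getElem?_cons_succ] at hb
        exact List.rel_of_pairwise_cons hdist (List.mem_iff_getElem?.2 ⟨j, hb⟩)
    | succ i =>
      cases j with
      | zero =>
        simp only [List.getElem?_cons_zero, Option.some.injEq] at hb
        subst hb
        simp only [List.getElem?_cons_succ] at ha
        exact (List.rel_of_pairwise_cons hdist (List.mem_iff_getElem?.2 ⟨i, ha⟩)).symm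
      | succ j =>
        simp only [List.getElem?_cons_succ] at ha hb
        exact ih hdist.of_cons (by omega) ha hb

theorem subTy_corr {Γ : Ctx} {es n Γ'} (h : SubTy Γ es n Γ') :
    ∀ (i m : ℕ) (f g : Flag), es.Pairwise (fun a b => a.1 ≠ b.1) → (∀ e ∈ es, e.2.1 = e.2.2 ∧ 1 ≤ e.1) →
    es[i]? = some (m, f, g) →
    ∃ A c c', Γ[m-1]? = some (A, c) ∧ Γ'[i]? = some (A, c') ∧ cToF c = f ∧
      (c' = c ∨ (c = CFlag.a ∧ c' = CFlag.ua)) := by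
  induction h with
  | nil => intro i m f g _ _ he; simp at he
  | shift h hl ih => intro i m f g _ _ he; simp at he
  | @consI Γ m₀ f₀ A es n Γ' hv h ih =>
    intro i m f g hdist hpat he
    cases i with
    | zero =>
      simp only [List.getElem?_cons_zero, Option.some.injEq, Prod.mk.injEq] at he
      obtain ⟨rfl, rfl, rfl⟩ := he
      obtain ⟨hm1, h2⟩ := varTy_get hv
      rw [bar_get] at h2
      match hΓ : Γ[m₀-1]? with
      | none => rw [hΓ] at h2; simp at h2
      | some e₀ =>
        rw [hΓ] at h2
        obtain ⟨B, c⟩ := e₀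
        simp only [Option.map_some, Option.some.injEq, Prod.mk.injEq] at h2
        obtain ⟨rfl, hbf⟩ := h2
        obtain ⟨rfl, rfl⟩ := barF_eq_flagC hbf
        exact ⟨B, .i, .i, rfl, by simp, rfl, Or.inl rfl⟩
    | succ j =>
      simp only [List.getElem?_cons_succ] at he
      obtain ⟨A', c, c', h1, h2, h3, h4⟩ := ih j m f g hdist.of_cons
        (fun e he' => hpat e (List.mem_cons_of_mem _ he')) he
      exact ⟨A', c, c', h1, by simpa using h2, h3, h4⟩
  | @consL Γ Γ₁ Γ₂ m₀ f₀ A es n Γ' hs hv h ih =>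
    intro i m f g hdist hpat he
    cases i with
    | zero =>
      simp only [List.getElem?_cons_zero, Option.some.injEq, Prod.mk.injEq] at he
      obtain ⟨rfl, rfl, rfl⟩ := he
      have hf : f₀ = Flag.L := (hpat _ (List.mem_cons_self)).1
      subst hf
      obtain ⟨hm1, h2⟩ := varTy_get hv
      obtain ⟨c, c₂, hΓ, hΓ₂, hsf⟩ := split_elem₁ hs h2
      cases hsf
      exact ⟨A, .l, .l, hΓ, by simp, rfl, Or.inl rfl⟩
    | succ j =>
      simp only [List.getElem?_cons_succ] at he
      obtain ⟨A', c₂, c', h1, h2, h3, h4⟩ := ih j m f g hdist.of_cons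
        (fun e he' => hpat e (List.mem_cons_of_mem _ he')) he
      obtain ⟨c, c₁, hΓ, hΓ₁, hsf⟩ := split_elem₂ hs h1
      have hm1 : 1 ≤ m := by
        have := hpat (m, f, g) ?_
        · exact this.2
        · exact List.mem_cons_of_mem _ (List.mem_iff_getElem?.2 ⟨j, he⟩)
      have hctof : cToF c = f := by rw [← h3, (cToF_splitF hsf).2]
      refine ⟨A', c, c', hΓ, by simpa using h2, hctof, ?_⟩
      cases hsf with
      | int => exact h4
      | ulin => exact h4
      | uaff => exact h4
      | linr => exact h4
      | affr => exact h4
      | linl =>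
        exfalso
        have hm₀ : m - 1 = m₀ - 1 := by
          by_contra hne
          exact varTy_ne_l hv (m-1) (A', .l) hne hΓ₁ rfl
        have hm₀1 := (varTy_get hv).1
        have : m₀ = m := by omega
        subst this
        have hhd := List.rel_of_pairwise_cons hdist
          (List.mem_iff_getElem?.2 ⟨j, he⟩)
        exact hhd rfl
      | affl =>
        rcases h4 with rfl | ⟨h5, rfl⟩
        · exact Or.inr ⟨rfl, rfl⟩
        · exact Or.inr ⟨rfl, rfl⟩
  | @consA Γ Γ₁ Γ₂ m₀ f₀ A es n Γ' hs hnl hv h ih =>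
    intro i m f g hdist hpat he
    cases i with
    | zero =>
      simp only [List.getElem?_cons_zero, Option.some.injEq, Prod.mk.injEq] at he
      obtain ⟨rfl, rfl, rfl⟩ := he
      have hf : f₀ = Flag.A := (hpat _ (List.mem_cons_self)).1
      subst hf
      obtain ⟨hm1, h2⟩ := varTy_get hv
      obtain ⟨c, c₂, hΓ, hΓ₂, hsf⟩ := split_elem₁ hs h2
      cases hsf
      exact ⟨A, .a, .a, hΓ, by simp, rfl, Or.inl rfl⟩
    | succ j =>
      simp only [List.getElem?_cons_succ] at he
      obtain ⟨A', c₂, c', h1, h2, h3, h4⟩ := ih j m f g hdist.of_cons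
        (fun e he' => hpat e (List.mem_cons_of_mem _ he')) he
      obtain ⟨c, c₁, hΓ, hΓ₁, hsf⟩ := split_elem₂ hs h1
      have hctof : cToF c = f := by rw [← h3, (cToF_splitF hsf).2]
      refine ⟨A', c, c', hΓ, by simpa using h2, hctof, ?_⟩
      cases hsf with
      | int => exact h4
      | ulin => exact h4
      | uaff => exact h4
      | linr => exact h4
      | affr => exact h4
      | linl => exact absurd rfl (hnl (A', .l) (List.mem_iff_getElem?.2 ⟨m-1, hΓ₁⟩))
      | affl =>
        rcases h4 with rfl | ⟨h5, rfl⟩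
        · exact Or.inr ⟨rfl, rfl⟩
        · exact Or.inr ⟨rfl, rfl⟩
  | @consUL Γ m₀ f₀ A es n Γ' hv h ih =>
    intro i m f g hdist hpat he
    cases i with
    | zero =>
      simp only [List.getElem?_cons_zero, Option.some.injEq, Prod.mk.injEq] at he
      obtain ⟨rfl, rfl, rfl⟩ := he
      have hf : f₀ = Flag.L := (hpat _ (List.mem_cons_self)).1
      subst hf
      obtain ⟨hm1, c, hc, hcf⟩ := varTyR_iff.1 hv
      rcases cToF_L hcf with rfl | rfl
      · exfalso
        obtain ⟨e, he', he1⟩ := subTy_lin h (m₀-1) A hc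
        have := List.rel_of_pairwise_cons hdist he'
        omega
      · exact ⟨A, .ul, .ul, hc, by simp, rfl, Or.inl rfl⟩
    | succ j =>
      simp only [List.getElem?_cons_succ] at he
      obtain ⟨A', c, c', h1, h2, h3, h4⟩ := ih j m f g hdist.of_cons
        (fun e he' => hpat e (List.mem_cons_of_mem _ he')) he
      exact ⟨A', c, c', h1, by simpa using h2, h3, h4⟩
  | @consUA Γ m₀ f₀ A es n Γ' hv hf h ih =>
    intro i m f g hdist hpat he
    cases i with
    | zero =>
      simp only [List.getElem?_cons_zero, Option.some.injEq, Prod.mk.injEq] at he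
      obtain ⟨rfl, rfl, rfl⟩ := he
      have hfa : f₀ = Flag.A := (hpat _ (List.mem_cons_self)).1
      subst hfa
      obtain ⟨hm1, c, hc, hcf⟩ := varTyR_iff.1 hv
      rcases cToF_A hcf with rfl | rfl
      · exact ⟨A, .a, .ua, hc, by simp, rfl, Or.inr ⟨rfl, rfl⟩⟩
      · exact ⟨A, .ua, .ua, hc, by simp, rfl, Or.inl rfl⟩
    | succ j =>
      simp only [List.getElem?_cons_succ] at he
      obtain ⟨A', c, c', h1, h2, h3, h4⟩ := ih j m f g hdist.of_cons
        (fun e he' => hpat e (List.mem_cons_of_mem _ he')) he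
      exact ⟨A', c, c', h1, by simpa using h2, h3, h4⟩

theorem entry_corr {Γ Γ' : Ctx} {es sh} (hty : SubTy Γ es sh Γ') (hpat : PatternSub es)
    (hstrong : ∀ Γ'', AffWeak Γ'' Γ' → SubTy Γ es sh Γ'' → Γ'' = Γ') :
    ∀ (i m : ℕ) (f g : Flag), es[i]? = some (m, f, g) →
    ∃ A c, Γ[m-1]? = some (A, c) ∧ Γ'[i]? = some (A, c) ∧ cToF c = f ∧ f = g ∧ 1 ≤ m := by
  intro i m f g he
  obtain ⟨hdist, hp⟩ := hpat
  have hmem : (m, f, g) ∈ es := List.mem_iff_getElem?.2 ⟨i, he⟩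
  have hfg : f = g := (hp _ hmem).1
  have hm1 : 1 ≤ m := (hp _ hmem).2
  obtain ⟨A, c, c', h1, h2, h3, h4⟩ := subTy_corr hty i m f g hdist hp he
  rcases h4 with h4 | ⟨rfl, rfl⟩
  · rw [h4] at h2; exact ⟨A, c, h1, h2, h3, hfg, hm1⟩
  · -- strong typing excludes the a→ua case
    exfalso
    have hfA : f = Flag.A := by rw [← h3]; rfl
    subst hfA
    have hne : ∀ j e, j ≠ i → es[j]? = some e → e.1 ≠ m := by
      intro j e hj hje
      have := pairwise_ne_get hdist (a := e) (b := (m, Flag.A, g)) (fun h => hj h) hje he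
      exact this
    have hst := subTy_strengthen hty i m g A CFlag.a he h1
      (Or.inl rfl) h2 hne hm1
    rw [set_same h1] at hst
    have hAW : AffWeak (Γ'.set i (A, CFlag.a)) Γ' := by
      refine ⟨(bar Γ').set i (A, CFlag.a), ?_, noLin_set (noLin_bar Γ') (by simp)⟩
      apply split_of_pointwise (by simp [bar_length]) (by simp)
      intro k e e₁ e₂ hk hk1 hk2
      have hilen : i < Γ'.length := (List.getElem?_eq_some_iff.1 h2).1
      by_cases hki : k = i
      · subst hki
        rw [getElem?_set_self' (by omega)] at hk
        rw [getElem?_set_self' (by rw [bar_length]; omega)] at hk1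
        rw [h2] at hk2
        cases hk; cases hk1; cases hk2
        exact ⟨rfl, rfl, SplitF.affl⟩
      · rw [List.getElem?_set_ne (fun h => hki h.symm)] at hk hk1
        rw [bar_get, hk2] at hk1
        rw [hk2] at hk
        cases hk; cases hk1
        exact ⟨rfl, rfl, splitF_bar e.2⟩
    have := hstrong _ hAW hst
    have hii : (Γ'.set i (A, CFlag.a))[i]? = some (A, CFlag.a) :=
      getElem?_set_self' (by exact (List.getElem?_eq_some_iff.1 h2).1)
    rw [this, h2] at hii
    simp at hii

-- ===== Part 7: the transport invariant =====

structure Inv (G : ℕ → Prop) (t u : SubE) (st su : ℕ) (Δ Δ' : Ctx) : Prop where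
  stE : st = Δ'.length
  suE : su = Δ.length
  fwd : ∀ p, G p → p < Δ.length → ∃ q f A c, t[p]? = some (q+1, f, f) ∧
        u[q]? = some (p+1, f, f) ∧ Δ[p]? = some (A, c) ∧ Δ'[q]? = some (A, c) ∧ cToF c = f
  inj : ∀ (p p' q : ℕ) (f f' : Flag × Flag), G p → G p' → p < Δ.length → p' < Δ.length →
        t[p]? = some (q, f) → t[p']? = some (q, f') → p = p'
  ncov : ∀ q, q < Δ'.length → (∀ p (f : Flag × Flag), G p → p < Δ.length →
          t[p]? ≠ some (q+1, f)) →
        ∃ A c, Δ'[q]? = some (A, c) ∧ (c = CFlag.i ∨ c = CFlag.ua ∨ c = CFlag.ul)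

open Classical in
noncomputable def transCtx (G : ℕ → Prop) (t : SubE) (Δ Δi Δ' : Ctx) : Ctx :=
  (List.range Δ'.length).map fun q =>
    if h : ∃ p, G p ∧ p < Δ.length ∧ ∃ f : Flag × Flag, t[p]? = some (q+1, f) then
      Δi.getD h.choose (Ty.base 0, CFlag.i)
    else Δ'.getD q (Ty.base 0, CFlag.i)

theorem transCtx_length (G t Δ Δi Δ') : (transCtx G t Δ Δi Δ').length = Δ'.length := by
  simp [transCtx]

theorem transCtx_get_cov {G : ℕ → Prop} {t : SubE} {Δ Δi Δ' : Ctx}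
    (hinj : ∀ (p p' q : ℕ) (f f' : Flag × Flag), G p → G p' → p < Δ.length → p' < Δ.length →
        t[p]? = some (q, f) → t[p']? = some (q, f') → p = p')
    {p q : ℕ} {f : Flag × Flag} (hp : G p) (hplen : p < Δ.length)
    (ht : t[p]? = some (q+1, f)) (hq : q < Δ'.length) (hilen : Δi.length = Δ.length) :
    ∃ e, Δi[p]? = some e ∧ (transCtx G t Δ Δi Δ')[q]? = some e := by
  obtain ⟨e, he⟩ := getElem?_of_lt (Γ := Δi) (k := p) (by omega)
  refine ⟨e, he, ?_⟩
  have hrange : (List.range Δ'.length)[q]? = some q := by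
    simp [List.getElem?_range, hq]
  rw [transCtx, List.getElem?_map, hrange]
  have hex : ∃ p, G p ∧ p < Δ.length ∧ ∃ f : Flag × Flag, t[p]? = some (q+1, f) :=
    ⟨p, hp, hplen, f, ht⟩
  simp only [Option.map_some, Option.some.injEq]
  rw [dif_pos hex]
  obtain ⟨hp', hplen', f', ht'⟩ := hex.choose_spec
  have : hex.choose = p := hinj _ _ _ _ _ hp' hp hplen' hplen ht' ht
  rw [this, List.getD_eq_getElem?_getD, he]
  rfl

theorem transCtx_get_ncov {G : ℕ → Prop} {t : SubE} {Δ Δi Δ' : Ctx} {q : ℕ}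
    (hnc : ∀ p (f : Flag × Flag), G p → p < Δ.length → t[p]? ≠ some (q+1, f))
    (hq : q < Δ'.length) :
    (transCtx G t Δ Δi Δ')[q]? = Δ'[q]? := by
  have hrange : (List.range Δ'.length)[q]? = some q := by
    simp [List.getElem?_range, hq]
  rw [transCtx, List.getElem?_map, hrange]
  have hnex : ¬ ∃ p, G p ∧ p < Δ.length ∧ ∃ f : Flag × Flag, t[p]? = some (q+1, f) := by
    rintro ⟨p, hp, hplen, f, ht⟩
    exact hnc p f hp hplen ht
  simp only [Option.map_some, dif_neg hnex]
  obtain ⟨e, he⟩ := getElem?_of_lt (Γ := Δ') hq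
  rw [List.getD_eq_getElem?_getD, he]
  rfl

theorem inv_mono {G t u st su Δ Δ'} (hI : Inv G t u st su Δ Δ') {Δi : Ctx}
    (hlen : Δi.length = Δ.length)
    (hpt : ∀ (k : ℕ) (e ei : Ty × CFlag), Δ[k]? = some e → Δi[k]? = some ei →
      ei.1 = e.1 ∧ cToF ei.2 = cToF e.2) :
    Inv G t u st su Δi (transCtx G t Δ Δi Δ') where
  stE := by rw [transCtx_length]; exact hI.stE
  suE := by rw [hlen]; exact hI.suE
  fwd := by
    intro p hp hplen
    rw [hlen] at hplen
    obtain ⟨q, f, A, c, ht, hu, hΔ, hΔ', hcf⟩ := hI.fwd p hp hplen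
    have hq : q < Δ'.length := (List.getElem?_eq_some_iff.1 hΔ').1
    obtain ⟨ei, hei, htr⟩ := transCtx_get_cov hI.inj hp hplen ht hq hlen
    obtain ⟨hty, hcf'⟩ := hpt p (A, c) ei hΔ hei
    obtain ⟨B, ci⟩ := ei
    simp only at hty hcf'
    exact ⟨q, f, B, ci, ht, hu, by rw [hei, hty], htr, by rw [hcf', hcf]⟩
  inj := by
    intro p p' q f f' hp hp' hplen hplen' ht ht'
    rw [hlen] at hplen hplen'
    exact hI.inj p p' q f f' hp hp' hplen hplen' ht ht'
  ncov := by
    intro q hq hnc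
    rw [transCtx_length] at hq
    rw [hlen] at hnc
    rw [transCtx_get_ncov hnc hq]
    exact hI.ncov q hq hnc

theorem inv_split {G t u st su Δ Δ'} (hI : Inv G t u st su Δ Δ') {Δ₁ Δ₂ : Ctx}
    (hs : Split Δ Δ₁ Δ₂) :
    Split Δ' (transCtx G t Δ Δ₁ Δ') (transCtx G t Δ Δ₂ Δ') := by
  apply split_of_pointwise (transCtx_length _ _ _ _ _) (transCtx_length _ _ _ _ _)
  intro q e e₁ e₂ he he1 he2
  have hq : q < Δ'.length := (List.getElem?_eq_some_iff.1 he).1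
  by_cases hcov : ∃ p, G p ∧ p < Δ.length ∧ ∃ f : Flag × Flag, t[p]? = some (q+1, f)
  · obtain ⟨p, hp, hplen, f, ht⟩ := hcov
    obtain ⟨q₀, f₀, A, c, ht₀, hu, hΔ, hΔ', hcf⟩ := hI.fwd p hp hplen
    rw [ht] at ht₀
    simp only [Option.some.injEq, Prod.mk.injEq] at ht₀
    obtain ⟨hq1, hf⟩ := ht₀
    have hq₀ : q₀ = q := by omega
    subst hq₀
    rw [he] at hΔ'
    cases hΔ'
    obtain ⟨c₁, c₂, h1, h2, hsf⟩ := split_get hs p (A, c) hΔ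
    obtain ⟨e₁', hei1, htr1⟩ := transCtx_get_cov (Δi := Δ₁) hI.inj hp hplen ht hq
      (split_length hs).1
    obtain ⟨e₂', hei2, htr2⟩ := transCtx_get_cov (Δi := Δ₂) hI.inj hp hplen ht hq
      (split_length hs).2
    rw [htr1] at he1; rw [htr2] at he2
    cases he1; cases he2
    rw [hei1] at h1; rw [hei2] at h2
    cases h1; cases h2
    exact ⟨rfl, rfl, hsf⟩
  · push_neg at hcov
    have hnc : ∀ p (f : Flag × Flag), G p → p < Δ.length → t[p]? ≠ some (q+1, f) := by
      intro p f hp hplen hne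
      exact absurd hne (hcov p hp hplen f)
    rw [transCtx_get_ncov hnc hq, he] at he1 he2
    cases he1; cases he2
    obtain ⟨A, c, hΔ', hused⟩ := hI.ncov q hq hnc
    rw [he] at hΔ'
    cases hΔ'
    exact ⟨rfl, rfl, splitF_self hused⟩

-- ===== Part 8: more transports =====

theorem lookupE_of_get {t : SubE} {m a : ℕ} {f₀ g₀ : Flag} (h : t[m-1]? = some (a, f₀, g₀))
    (sh : ℕ) (f : Flag) : lookupE t sh m f = (a, f₀) := by
  rw [lookupE, h]

theorem varTy_trans {G t u st su Δ Δ'} (hI : Inv G t u st su Δ Δ') {m : ℕ} {f A}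
    (hp : G (m-1)) (hv : VarTy Δ m f A) :
    ∃ q, t[m-1]? = some (q+1, f, f) ∧ u[q]? = some (m, f, f) ∧ VarTy Δ' (q+1) f A := by
  obtain ⟨hm1, hget⟩ := varTy_get hv
  have hplen : m - 1 < Δ.length := (List.getElem?_eq_some_iff.1 hget).1
  obtain ⟨q, f₀, A₀, c, ht, hu, hΔ, hΔ', hcf⟩ := hI.fwd (m-1) hp hplen
  rw [hget] at hΔ
  cases hΔ
  have hf₀ : f₀ = f := by rw [← hcf, cToF_flagC]
  subst hf₀
  refine ⟨q, ht, by rwa [show m-1+1 = m by omega] at hu, ?_⟩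
  apply varTy_of_get hΔ'
  intro j e hj he
  by_cases hcov : ∃ p, G p ∧ p < Δ.length ∧ ∃ fx : Flag × Flag, t[p]? = some (j+1, fx)
  · obtain ⟨p, hp', hplen', fx, ht'⟩ := hcov
    obtain ⟨q', f', A', c', ht'', hu', hΔ₂, hΔ'₂, hcf'⟩ := hI.fwd p hp' hplen'
    rw [ht'] at ht''
    simp only [Option.some.injEq, Prod.mk.injEq] at ht''
    have hq' : q' = j := by omega
    subst hq'
    rw [he] at hΔ'₂
    cases hΔ'₂
    have hpm : p ≠ m - 1 := by
      intro hc; subst hc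
      rw [ht] at ht'
      simp only [Option.some.injEq, Prod.mk.injEq] at ht'
      omega
    exact varTy_ne_l hv p (A', c') hpm hΔ₂
  · push_neg at hcov
    have hnc : ∀ p (fx : Flag × Flag), G p → p < Δ.length → t[p]? ≠ some (j+1, fx) :=
      fun p fx hp' hplen' hne => absurd hne (hcov p hp' hplen' fx)
    obtain ⟨A', c', hΔ'₂, hused⟩ := hI.ncov j (List.getElem?_eq_some_iff.1 he).1 hnc
    rw [he] at hΔ'₂
    cases hΔ'₂
    rcases hused with rfl | rfl | rfl <;> simp

theorem varTyR_trans {G t u st su Δ Δ'} (hI : Inv G t u st su Δ Δ') {m : ℕ} {f A}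
    (hp : G (m-1)) (hv : VarTyR Δ m f A) :
    ∃ q, t[m-1]? = some (q+1, f, f) ∧ u[q]? = some (m, f, f) ∧ VarTyR Δ' (q+1) f A := by
  obtain ⟨hm1, c₀, hget, hcf₀⟩ := varTyR_iff.1 hv
  have hplen : m - 1 < Δ.length := (List.getElem?_eq_some_iff.1 hget).1
  obtain ⟨q, f₀, A₀, c, ht, hu, hΔ, hΔ', hcf⟩ := hI.fwd (m-1) hp hplen
  rw [hget] at hΔ
  cases hΔ
  have hf₀ : f₀ = f := by rw [← hcf, hcf₀]
  subst hf₀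
  refine ⟨q, ht, by rwa [show m-1+1 = m by omega] at hu, ?_⟩
  exact varTyR_iff.2 ⟨by omega, c₀, by simpa using hΔ', hcf₀⟩

theorem noLin_trans {G t u st su Δ Δ'} (hI : Inv G t u st su Δ Δ') {Δi : Ctx}
    (hlen : Δi.length = Δ.length) (hnl : NoLin Δi) :
    NoLin (transCtx G t Δ Δi Δ') := by
  intro e he
  obtain ⟨q, hq⟩ := List.mem_iff_getElem?.1 he
  have hqlen : q < Δ'.length := by
    have := (List.getElem?_eq_some_iff.1 hq).1
    rwa [transCtx_length] at this
  by_cases hcov : ∃ p, G p ∧ p < Δ.length ∧ ∃ fx : Flag × Flag, t[p]? = some (q+1, fx)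
  · obtain ⟨p, hp', hplen', fx, ht'⟩ := hcov
    obtain ⟨e', hei, htr⟩ := transCtx_get_cov (Δi := Δi) hI.inj hp' hplen' ht' hqlen hlen
    rw [hq] at htr
    cases htr
    exact hnl e (List.mem_iff_getElem?.2 ⟨p, hei⟩)
  · push_neg at hcov
    have hnc : ∀ p (fx : Flag × Flag), G p → p < Δ.length → t[p]? ≠ some (q+1, fx) :=
      fun p fx hp' hplen' hne => absurd hne (hcov p hp' hplen' fx)
    rw [transCtx_get_ncov hnc hqlen] at hq
    obtain ⟨A', c', hΔ', hused⟩ := hI.ncov q hqlen hnc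
    rw [hq] at hΔ'
    cases hΔ'
    rcases hused with rfl | rfl | rfl <;> simp

theorem inv_noLin' {G t u st su Δ Δ'} (hI : Inv G t u st su Δ Δ')
    (h : ∀ e ∈ Δ, e.2 ≠ CFlag.l) : ∀ e ∈ Δ', e.2 ≠ CFlag.l := by
  intro e he
  obtain ⟨q, hq⟩ := List.mem_iff_getElem?.1 he
  have hqlen : q < Δ'.length := (List.getElem?_eq_some_iff.1 hq).1
  by_cases hcov : ∃ p, G p ∧ p < Δ.length ∧ ∃ fx : Flag × Flag, t[p]? = some (q+1, fx)
  · obtain ⟨p, hp', hplen', fx, ht'⟩ := hcov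
    obtain ⟨q', f', A', c', ht'', hu', hΔ₂, hΔ'₂, hcf'⟩ := hI.fwd p hp' hplen'
    rw [ht'] at ht''
    simp only [Option.some.injEq, Prod.mk.injEq] at ht''
    have hq' : q' = q := by omega
    subst hq'
    rw [hq] at hΔ'₂
    cases hΔ'₂
    exact h _ (List.mem_iff_getElem?.2 ⟨p, hΔ₂⟩)
  · push_neg at hcov
    have hnc : ∀ p (fx : Flag × Flag), G p → p < Δ.length → t[p]? ≠ some (q+1, fx) :=
      fun p fx hp' hplen' hne => absurd hne (hcov p hp' hplen' fx)
    obtain ⟨A', c', hΔ', hused⟩ := hI.ncov q hqlen hnc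
    rw [hq] at hΔ'
    cases hΔ'
    rcases hused with rfl | rfl | rfl <;> simp

theorem inv_bar {G t u st su Δ Δ'} (hI : Inv G t u st su Δ Δ') :
    Inv G t u st su (bar Δ) (bar Δ') where
  stE := by rw [bar_length]; exact hI.stE
  suE := by rw [bar_length]; exact hI.suE
  fwd := by
    intro p hp hplen
    rw [bar_length] at hplen
    obtain ⟨q, f, A, c, ht, hu, hΔ, hΔ', hcf⟩ := hI.fwd p hp hplen
    exact ⟨q, f, A, barF c, ht, hu, by rw [bar_get, hΔ]; rfl, by rw [bar_get, hΔ']; rfl,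
      by rw [cToF_barF, hcf]⟩
  inj := by
    intro p p' q f f' hp hp' hplen hplen' ht ht'
    rw [bar_length] at hplen hplen'
    exact hI.inj p p' q f f' hp hp' hplen hplen' ht ht'
  ncov := by
    intro q hq _
    rw [bar_length] at hq
    obtain ⟨e, he⟩ := getElem?_of_lt (Γ := Δ') hq
    refine ⟨e.1, barF e.2, by rw [bar_get, he]; rfl, barF_used e.2⟩

theorem shiftE_get (t : SubE) (p : ℕ) :
    (shiftE t)[p]? = t[p]?.map (fun e => (e.1 + 1, e.2)) := by
  rw [shiftE, List.getElem?_map]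

theorem inv_ext {G t u st su Δ Δ'} (hI : Inv G t u st su Δ Δ') (fb : Flag) (B : Ty) :
    Inv (fun p => p = 0 ∨ G (p-1)) (extSub t fb) (extSub u fb) (st+1) (su+1)
      ((B, flagC fb)::Δ) ((B, flagC fb)::Δ') where
  stE := by simp [hI.stE]
  suE := by simp [hI.suE]
  fwd := by
    intro p hp hplen
    cases p with
    | zero =>
      exact ⟨0, fb, B, flagC fb, by simp [extSub], by simp [extSub], by simp, by simp,
        cToF_flagC fb⟩
    | succ p =>
      have hG : G p := by
        rcases hp with h | h
        · exact absurd h (Nat.succ_ne_zero _)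
        · simpa using h
      obtain ⟨q, f, A, c, ht, hu, hΔ, hΔ', hcf⟩ := hI.fwd p hG (by simpa using hplen)
      refine ⟨q+1, f, A, c, ?_, ?_, by simpa using hΔ, by simpa using hΔ', hcf⟩
      · simp only [extSub, List.getElem?_cons_succ, shiftE_get, ht]; rfl
      · simp only [extSub, List.getElem?_cons_succ, shiftE_get, hu]; rfl
  inj := by
    intro p p' q f f' hp hp' hplen hplen' ht ht'
    match p, p' with
    | 0, 0 => rfl
    | 0, p'+1 =>
      exfalso
      simp only [extSub, List.getElem?_cons_zero, Option.some.injEq, Prod.mk.injEq] at ht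
      simp only [extSub, List.getElem?_cons_succ, shiftE_get] at ht'
      have hG : G p' := by
        rcases hp' with h | h
        · exact absurd h (Nat.succ_ne_zero _)
        · simpa using h
      obtain ⟨q', f₀, A, c, ht₀, _, _, _, _⟩ := hI.fwd p' hG (by simpa using hplen')
      rw [ht₀] at ht'
      simp only [Option.map_some, Option.some.injEq, Prod.mk.injEq] at ht'
      omega
    | p+1, 0 =>
      exfalso
      simp only [extSub, List.getElem?_cons_zero, Option.some.injEq, Prod.mk.injEq] at ht'
      simp only [extSub, List.getElem?_cons_succ, shiftE_get] at ht
      have hG : G p := by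
        rcases hp with h | h
        · exact absurd h (Nat.succ_ne_zero _)
        · simpa using h
      obtain ⟨q', f₀, A, c, ht₀, _, _, _, _⟩ := hI.fwd p hG (by simpa using hplen)
      rw [ht₀] at ht
      simp only [Option.map_some, Option.some.injEq, Prod.mk.injEq] at ht
      omega
    | p+1, p'+1 =>
      have hG : G p := by
        rcases hp with h | h
        · exact absurd h (Nat.succ_ne_zero _)
        · simpa using h
      have hG' : G p' := by
        rcases hp' with h | h
        · exact absurd h (Nat.succ_ne_zero _)
        · simpa using h
      simp only [extSub, List.getElem?_cons_succ, shiftE_get] at ht ht'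
      match hx : t[p]?, hx' : t[p']? with
      | none, _ => rw [hx] at ht; simp at ht
      | some e, none => rw [hx'] at ht'; simp at ht'
      | some e, some e' =>
        rw [hx] at ht; rw [hx'] at ht'
        simp only [Option.map_some, Option.some.injEq, Prod.mk.injEq] at ht ht'
        have : e.1 = e'.1 := by omega
        have := hI.inj p p' e.1 e.2 e'.2 hG hG' (by simpa using hplen) (by simpa using hplen')
          (by rw [hx]) (by rw [hx', this])
        omega
  ncov := by
    intro q hq hnc
    cases q with
    | zero =>
      exfalso
      exact hnc 0 (fb, fb) (Or.inl rfl) (by simp) (by simp [extSub])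
    | succ q =>
      have hq' : q < Δ'.length := by simpa using hq
      have hnc' : ∀ p (fx : Flag × Flag), G p → p < Δ.length → t[p]? ≠ some (q+1, fx) := by
        intro p fx hp hplen hne
        exact hnc (p+1) fx (Or.inr (by simpa using hp)) (by simpa using hplen)
          (by simp only [extSub, List.getElem?_cons_succ, shiftE_get, hne]; rfl)
      obtain ⟨A, c, hΔ', hused⟩ := hI.ncov q hq' hnc'
      exact ⟨A, c, by simpa using hΔ', hused⟩

-- ===== Part 9: transport of substitution typings =====

theorem split_pt₁ {Δ Δ₁ Δ₂ : Ctx} (hs : Split Δ Δ₁ Δ₂) :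
    ∀ (k : ℕ) (e ei : Ty × CFlag), Δ[k]? = some e → Δ₁[k]? = some ei →
      ei.1 = e.1 ∧ cToF ei.2 = cToF e.2 := by
  intro k e ei he hei
  obtain ⟨c₁, c₂, h1, h2, hsf⟩ := split_get hs k e he
  rw [h1] at hei
  cases hei
  exact ⟨rfl, (cToF_splitF hsf).1⟩

theorem split_pt₂ {Δ Δ₁ Δ₂ : Ctx} (hs : Split Δ Δ₁ Δ₂) :
    ∀ (k : ℕ) (e ei : Ty × CFlag), Δ[k]? = some e → Δ₂[k]? = some ei →
      ei.1 = e.1 ∧ cToF ei.2 = cToF e.2 := by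
  intro k e ei he hei
  obtain ⟨c₁, c₂, h1, h2, hsf⟩ := split_get hs k e he
  rw [h2] at hei
  cases hei
  exact ⟨rfl, (cToF_splitF hsf).2⟩

theorem transport_nil {G t u st su Δ Δ'} (hI : Inv G t u st su Δ Δ') {n : ℕ} {Γ₀ : Ctx}
    (h : SubTy Δ [] n Γ₀) : SubTy Δ' [] st Γ₀ := by
  obtain ⟨rfl, hfl⟩ := subTy_nil_inv h rfl
  have := subTy_nil_of (inv_noLin' hI hfl)
  rw [hI.stE]
  exact this

theorem transportSub {G : ℕ → Prop} {t u : SubE} {st su : ℕ} :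
    ∀ {Δc Δ'c : Ctx} {ts : SubE} {n : ℕ} {Γ₀ : Ctx}, SubTy Δc ts n Γ₀ →
    Inv G t u st su Δc Δ'c → (∀ e ∈ ts, G (e.1-1)) →
    SubTy Δ'c (ts.map (fun e =>
      ((lookupE t st e.1 e.2.1).1, (lookupE t st e.1 e.2.1).2, e.2.2))) st Γ₀ := by
  intro Δc Δ'c ts n Γ₀ h
  induction h generalizing Δ'c with
  | nil =>
    intro hI _
    exact transport_nil hI SubTy.nil
  | shift h hl =>
    intro hI _
    exact transport_nil hI (SubTy.shift h hl)
  | @consI Γ m f' A es n Γ' hv h ih =>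
    intro hI hts
    have hG : G (m-1) := hts _ (List.mem_cons_self)
    obtain ⟨q, ht, hu, hv'⟩ := varTy_trans (inv_bar hI) hG hv
    rw [List.map_cons]
    rw [lookupE_of_get ht]
    exact SubTy.consI hv' (ih hI (fun e he => hts e (List.mem_cons_of_mem _ he)))
  | @consL Γ Γ₁ Γ₂ m f' A es n Γ' hs hv h ih =>
    intro hI hts
    have hG : G (m-1) := hts _ (List.mem_cons_self)
    have hI₁ := inv_mono hI (split_length hs).1 (split_pt₁ hs)
    have hI₂ := inv_mono hI (split_length hs).2 (split_pt₂ hs)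
    obtain ⟨q, ht, hu, hv'⟩ := varTy_trans hI₁ hG hv
    rw [List.map_cons]
    rw [lookupE_of_get ht]
    exact SubTy.consL (inv_split hI hs) hv'
      (ih hI₂ (fun e he => hts e (List.mem_cons_of_mem _ he)))
  | @consA Γ Γ₁ Γ₂ m f' A es n Γ' hs hnl hv h ih =>
    intro hI hts
    have hG : G (m-1) := hts _ (List.mem_cons_self)
    have hI₁ := inv_mono hI (split_length hs).1 (split_pt₁ hs)
    have hI₂ := inv_mono hI (split_length hs).2 (split_pt₂ hs)
    obtain ⟨q, ht, hu, hv'⟩ := varTy_trans hI₁ hG hv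
    rw [List.map_cons]
    rw [lookupE_of_get ht]
    exact SubTy.consA (inv_split hI hs) (noLin_trans hI (split_length hs).1 hnl) hv'
      (ih hI₂ (fun e he => hts e (List.mem_cons_of_mem _ he)))
  | @consUL Γ m f' A es n Γ' hv h ih =>
    intro hI hts
    have hG : G (m-1) := hts _ (List.mem_cons_self)
    obtain ⟨q, ht, hu, hv'⟩ := varTyR_trans hI hG hv
    rw [List.map_cons]
    rw [lookupE_of_get ht]
    exact SubTy.consUL hv' (ih hI (fun e he => hts e (List.mem_cons_of_mem _ he)))
  | @consUA Γ m f' A es n Γ' hv hf h ih =>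
    intro hI hts
    have hG : G (m-1) := hts _ (List.mem_cons_self)
    obtain ⟨q, ht, hu, hv'⟩ := varTyR_trans hI hG hv
    rw [List.map_cons]
    rw [lookupE_of_get ht]
    exact SubTy.consUA hv' hf (ih hI (fun e he => hts e (List.mem_cons_of_mem _ he)))

-- ===== Part 10: main induction =====

theorem main_lemma {ΓX : ℕ → Ctx} {AX : ℕ → Ty} :
    ∀ {Δ : Ctx} {M : Tm} {A : Ty}, HasTy ΓX AX Δ M A →
    ∀ {G : ℕ → Prop} {t u : SubE} {st su : ℕ} {Δ' : Ctx}, Inv G t u st su Δ Δ' →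
    (∀ m, Occurs m M → G (m-1)) →
    HasTy ΓX AX Δ' (applySub t st M) A ∧ applySub u su (applySub t st M) = M := by
  intro Δ M A h
  induction h with
  | @var Γ n f A hv =>
    intro G t u st su Δ' hI hocc
    have hG : G (n-1) := hocc n Occurs.var
    obtain ⟨q, ht, hu, hv'⟩ := varTy_trans hI hG hv
    constructor
    · rw [applySub, lookupE_of_get ht]
      exact HasTy.var hv'
    · rw [applySub, lookupE_of_get ht]
      rw [applySub, lookupE_of_get (show u[q+1-1]? = some (n, f, f) by simpa using hu)]
  | @lvar Γ es' sh₀ X h =>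
    intro G t u st su Δ' hI hocc
    have hts : ∀ e ∈ es', G (e.1-1) := fun e he => hocc e.1 (Occurs.lvar he rfl)
    constructor
    · rw [applySub]
      exact HasTy.lvar (transportSub h hI hts)
    · rw [applySub, applySub, List.map_map]
      have hsh : su = sh₀ := by rw [hI.suE, subTy_sh h]
      have hid : ∀ e ∈ es', ((fun e => ((lookupE u su e.1 e.2.1).1,
            (lookupE u su e.1 e.2.1).2, e.2.2)) ∘ (fun e => ((lookupE t st e.1 e.2.1).1,
            (lookupE t st e.1 e.2.1).2, e.2.2))) e = e := by
        intro e he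
        obtain ⟨hm1, B, c, hΔ, hcf⟩ := subTy_entry h e he
        have hplen : e.1 - 1 < Γ.length := (List.getElem?_eq_some_iff.1 hΔ).1
        obtain ⟨q, f₀, A₀, c₀, ht, hu, hΔ₀, hΔ', hcf₀⟩ := hI.fwd (e.1-1) (hts e he) hplen
        rw [hΔ] at hΔ₀
        cases hΔ₀
        have hf₀ : f₀ = e.2.1 := by rw [← hcf₀, hcf]
        subst hf₀
        simp only [Function.comp_apply]
        rw [lookupE_of_get ht]
        rw [lookupE_of_get (show u[q+1-1]? = some (e.1-1+1, e.2.1, e.2.1) by simpa using hu)]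
        simp only []
        rw [show e.1 - 1 + 1 = e.1 by omega]
      rw [List.map_congr_left hid, List.map_id', hsh]
  | @pair Γ M N A B hM hN ihM ihN =>
    intro G t u st su Δ' hI hocc
    obtain ⟨h1, h2⟩ := ihM hI (fun m hm => hocc m (Occurs.pairl hm))
    obtain ⟨h3, h4⟩ := ihN hI (fun m hm => hocc m (Occurs.pairr hm))
    exact ⟨HasTy.pair h1 h3, by rw [applySub, applySub, h2, h4]⟩
  | @fst Γ M A B hM ihM =>
    intro G t u st su Δ' hI hocc
    obtain ⟨h1, h2⟩ := ihM hI (fun m hm => hocc m (Occurs.fst hm))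
    exact ⟨HasTy.fst h1, by rw [applySub, applySub, h2]⟩
  | @snd Γ M A B hM ihM =>
    intro G t u st su Δ' hI hocc
    obtain ⟨h1, h2⟩ := ihM hI (fun m hm => hocc m (Occurs.snd hm))
    exact ⟨HasTy.snd h1, by rw [applySub, applySub, h2]⟩
  | @lamL Γ M A B hM ihM =>
    intro G t u st su Δ' hI hocc
    obtain ⟨h1, h2⟩ := ihM (inv_ext hI Flag.L A)
      (fun m hm => by
        match m with
        | 0 => exact Or.inl rfl
        | 1 => exact Or.inl rfl
        | (p+2) => exact Or.inr (by simpa using hocc (p+1) (Occurs.lamL hm)))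
    exact ⟨HasTy.lamL h1, by rw [applySub, applySub, h2]⟩
  | @lamA Γ M A B hM ihM =>
    intro G t u st su Δ' hI hocc
    obtain ⟨h1, h2⟩ := ihM (inv_ext hI Flag.A A)
      (fun m hm => by
        match m with
        | 0 => exact Or.inl rfl
        | 1 => exact Or.inl rfl
        | (p+2) => exact Or.inr (by simpa using hocc (p+1) (Occurs.lamA hm)))
    exact ⟨HasTy.lamA h1, by rw [applySub, applySub, h2]⟩
  | @lamI Γ M A B hM ihM =>
    intro G t u st su Δ' hI hocc
    obtain ⟨h1, h2⟩ := ihM (inv_ext hI Flag.I A)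
      (fun m hm => by
        match m with
        | 0 => exact Or.inl rfl
        | 1 => exact Or.inl rfl
        | (p+2) => exact Or.inr (by simpa using hocc (p+1) (Occurs.lamI hm)))
    exact ⟨HasTy.lamI h1, by rw [applySub, applySub, h2]⟩
  | @appL Γ Γ₁ Γ₂ M N A B hs hM hN ihM ihN =>
    intro G t u st su Δ' hI hocc
    have hI₁ := inv_mono hI (split_length hs).1 (split_pt₁ hs)
    have hI₂ := inv_mono hI (split_length hs).2 (split_pt₂ hs)
    obtain ⟨h1, h2⟩ := ihM hI₁ (fun m hm => hocc m (Occurs.appLl hm))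
    obtain ⟨h3, h4⟩ := ihN hI₂ (fun m hm => hocc m (Occurs.appLr hm))
    exact ⟨HasTy.appL (inv_split hI hs) h1 h3, by rw [applySub, applySub, h2, h4]⟩
  | @appA Γ Γ₁ Γ₂ M N A B hs hnl hM hN ihM ihN =>
    intro G t u st su Δ' hI hocc
    have hI₁ := inv_mono hI (split_length hs).1 (split_pt₁ hs)
    have hI₂ := inv_mono hI (split_length hs).2 (split_pt₂ hs)
    obtain ⟨h1, h2⟩ := ihM hI₁ (fun m hm => hocc m (Occurs.appAl hm))
    obtain ⟨h3, h4⟩ := ihN hI₂ (fun m hm => hocc m (Occurs.appAr hm))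
    exact ⟨HasTy.appA (inv_split hI hs) (noLin_trans hI (split_length hs).2 hnl) h1 h3,
      by rw [applySub, applySub, h2, h4]⟩
  | @appI Γ M N A B hM hN ihM ihN =>
    intro G t u st su Δ' hI hocc
    obtain ⟨h1, h2⟩ := ihM hI (fun m hm => hocc m (Occurs.appIl hm))
    obtain ⟨h3, h4⟩ := ihN (inv_bar hI) (fun m hm => hocc m (Occurs.appIr hm))
    exact ⟨HasTy.appI h1 h3, by rw [applySub, applySub, h2, h4]⟩

-- ===== Part 11: top-level instantiation =====

theorem enum_find_aux {es : SubE} :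
    ∀ (_ : es.Pairwise (fun a b => a.1 ≠ b.1)) (i : ℕ) (e : ℕ × Flag × Flag),
    es[i]? = some e → ∀ k,
    ((es.zipIdx k).map fun q => (q.2, q.1)).find? (fun p => p.2.1 = e.1) = some (k+i, e) := by
  induction es with
  | nil => intro _ i e he; simp at he
  | cons x es ih =>
    intro hdist i e he k
    rw [List.zipIdx_cons, List.map_cons]
    cases i with
    | zero =>
      simp only [List.getElem?_cons_zero, Option.some.injEq] at he
      subst he
      rw [List.find?_cons_of_pos (by simp)]
      simp
    | succ i =>
      simp only [List.getElem?_cons_succ] at he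
      have hx : x.1 ≠ e.1 := List.rel_of_pairwise_cons hdist (List.mem_iff_getElem?.2 ⟨i, he⟩)
      rw [List.find?_cons_of_neg (by simpa using hx)]
      rw [ih hdist.of_cons i e he (k+1), show k+1+i = k+(i+1) by omega]

theorem enum_find {es : SubE} (hdist : es.Pairwise (fun a b => a.1 ≠ b.1))
    {i : ℕ} {e : ℕ × Flag × Flag} (he : es[i]? = some e) :
    (es.zipIdx.map fun q => (q.2, q.1)).find? (fun p => p.2.1 = e.1) = some (i, e) := by
  have := enum_find_aux hdist i e he 0
  rwa [Nat.zero_add] at this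

theorem invSub_get {es : SubE} (hdist : es.Pairwise (fun a b => a.1 ≠ b.1))
    {i m : ℕ} {f g : Flag} (he : es[i]? = some (m, f, g)) (n : ℕ) (hm : m - 1 < n)
    (hm1 : 1 ≤ m) : (invSub es n)[m-1]? = some (i+1, f, f) := by
  rw [invSub, List.getElem?_map, List.getElem?_range hm]
  simp only [Option.map_some, Option.some.injEq]
  rw [show m - 1 + 1 = m by omega]
  rw [enum_find hdist he]

theorem inv_top {Γ Γ' : Ctx} {es : SubE} {sh : ℕ} (hty : SubTy Γ es sh Γ')
    (hpat : PatternSub es)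
    (hstrong : ∀ Γ'', AffWeak Γ'' Γ' → SubTy Γ es sh Γ'' → Γ'' = Γ') :
    Inv (fun p => ∃ e ∈ es, e.1 = p + 1) (invSub es Γ.length) es es.length sh Γ Γ' where
  stE := (subTy_len hty).symm
  suE := subTy_sh hty
  fwd := by
    intro p hp hplen
    obtain ⟨e, he, hep⟩ := hp
    obtain ⟨i, hi⟩ := List.mem_iff_getElem?.1 he
    obtain ⟨m, f, g⟩ := e
    simp only at hep
    subst hep
    obtain ⟨A, c, h1, h2, h3, h4, h5⟩ := entry_corr hty hpat hstrong i (p+1) f g hi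
    subst h4
    refine ⟨i, f, A, c, ?_, ?_, ?_, h2, h3⟩
    · exact invSub_get hpat.1 hi Γ.length (by omega) (by omega)
    · exact hi
    · simpa using h1
  inj := by
    intro p p' q fx fx' hp hp' hplen hplen' ht ht'
    obtain ⟨e, he, hep⟩ := hp
    obtain ⟨i, hi⟩ := List.mem_iff_getElem?.1 he
    obtain ⟨m, f, g⟩ := e
    simp only at hep
    subst hep
    obtain ⟨e', he', hep'⟩ := hp'
    obtain ⟨i', hi'⟩ := List.mem_iff_getElem?.1 he'
    obtain ⟨m', f', g'⟩ := e'
    simp only at hep'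
    subst hep'
    have hg := invSub_get hpat.1 hi Γ.length (by omega) (by omega)
    have hg' := invSub_get hpat.1 hi' Γ.length (by omega) (by omega)
    simp only [Nat.add_sub_cancel] at hg hg'
    rw [hg] at ht
    rw [hg'] at ht'
    simp only [Option.some.injEq, Prod.mk.injEq] at ht ht'
    have : i = i' := by omega
    subst this
    rw [hi] at hi'
    simp only [Option.some.injEq, Prod.mk.injEq] at hi'
    omega
  ncov := by
    intro q hq hnc
    exfalso
    have hqes : q < es.length := by rw [← subTy_len hty]; exact hq
    obtain ⟨e, he⟩ := getElem?_of_lt hqes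
    obtain ⟨m, f, g⟩ := e
    obtain ⟨A, c, h1, h2, h3, h4, h5⟩ := entry_corr hty hpat hstrong q m f g he
    subst h4
    have hplen : m - 1 < Γ.length := (List.getElem?_eq_some_iff.1 h1).1
    exact hnc (m-1) (f, f) ⟨(m, f, f), List.mem_iff_getElem?.2 ⟨q, he⟩, by omega⟩ hplen
      (invSub_get hpat.1 he Γ.length (by omega) (by omega))

theorem inversion_solves' (ΓX : ℕ → Ctx) (AX : ℕ → Ty)
    (Γ Γ' : Ctx) (es : SubE) (sh : ℕ) (M : Tm) (A : Ty) (X : ℕ)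
    (hpat : PatternSub es)
    (hty : SubTy Γ es sh Γ')
    (hstrong : ∀ Γ'', AffWeak Γ'' Γ' → SubTy Γ es sh Γ'' → Γ'' = Γ')
    (hM : HasTy ΓX AX Γ M A)
    (hocc : ∀ m, Occurs m M → ∃ e ∈ es, e.1 = m) :
    HasTy ΓX AX Γ' (applySub (invSub es Γ.length) es.length M) A ∧
    applySub es sh (applySub (invSub es Γ.length) es.length M) = M := by
  apply main_lemma hM (inv_top hty hpat hstrong)
  intro m hm
  obtain ⟨e, he, hem⟩ := hocc m hm
  have hm1 : 1 ≤ e.1 := (hpat.2 e he).2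
  exact ⟨e, he, by omega⟩

/-- Inversion solves pattern equations: under a strong typing of
    a pattern substitution s, if every logic variable of M has base type, X
    does not occur in M, and every variable of M occurs in s, then M[s⁻¹] is
    well-typed in the codomain of s and (M[s⁻¹])[s] = M, so X ← M[s⁻¹] solves
    X[s] ≐ M. -/
theorem inversion_solves (ΓX : ℕ → Ctx) (AX : ℕ → Ty)
    (Γ Γ' : Ctx) (es : SubE) (sh : ℕ) (M : Tm) (A : Ty) (X : ℕ)
    (hpat : PatternSub es)
    (hty : SubTy Γ es sh Γ')
    (hstrong : ∀ Γ'', AffWeak Γ'' Γ' → SubTy Γ es sh Γ'' → Γ'' = Γ')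
    (hM : HasTy ΓX AX Γ M A)
    (hbase : ∀ Y, HasLvar Y M → ∃ a, AX Y = Ty.base a)
    (hX : ¬ HasLvar X M)
    (hocc : ∀ m, Occurs m M → ∃ e ∈ es, e.1 = m) :
    HasTy ΓX AX Γ' (applySub (invSub es Γ.length) es.length M) A ∧
    applySub es sh (applySub (invSub es Γ.length) es.length M) = M :=
  inversion_solves' ΓX AX Γ Γ' es sh M A X hpat hty hstrong hM hocc

end LinUnif
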